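/- arXiv:2011.01332 — 8 statements merged into one kernel-verified Lean document; each statement's English description precedes it below -/
import Mathlib

section
/- Let L ≥ 1 and let X_1, …, X_L be independent random variables such that X_i follows the Pearson type III distribution with parameters (a_i, b, m_i), where a_i > 0 for all i and b < 0 is common to all the X_i. Set sa = Σ_{i=1}^{L} a_i and sm = Σ_{i=1}^{L} m_i. Then for every n ∈ ℕ, the n-th moment of the log sum SY = exp(X_1 + ⋯ + X_L) satisfies E[exp(n(X_1 + ⋯ + X_L))] = e^{n·sm} (b/(b − n))^{sa}, where b/(b − n) > 0 since b < 0. -/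
open MeasureTheory ProbabilityTheory Set

/-- The Pearson type III density with shape `a`, inverse scale `b ≠ 0` and shift `m`,
supported on `(m, ∞)` when `b > 0` and on `(-∞, m)` when `b < 0`. -/
noncomputable def pearsonPDF (a b m : ℝ) (x : ℝ) : ℝ :=
  if (0 < b ∧ m < x) ∨ (b < 0 ∧ x < m) then
    |b| / Real.Gamma a * (b * (x - m)) ^ (a - 1) * Real.exp (-(b * (x - m)))
  else 0

lemma pearsonPDF_neg_eq_indicator {a b m : ℝ} (hb : b < 0) :
    pearsonPDF a b m = Set.indicator (Iio m)
      (fun x => |b| / Real.Gamma a * (b * (x - m)) ^ (a - 1) * Real.exp (-(b * (x - m)))) := by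
  funext x
  simp only [pearsonPDF, Set.indicator_apply, mem_Iio]
  congr 1
  simp only [eq_iff_iff]
  constructor
  · rintro (⟨h, _⟩ | ⟨_, h⟩)
    · linarith
    · exact h
  · intro h; exact Or.inr ⟨hb, h⟩

lemma pearsonPDF_nonneg {a b m : ℝ} (ha : 0 < a) (x : ℝ) : 0 ≤ pearsonPDF a b m x := by
  unfold pearsonPDF
  split_ifs with h
  · have hpos : 0 < b * (x - m) := by
      rcases h with ⟨hb, hx⟩ | ⟨hb, hx⟩
      · exact mul_pos hb (by linarith)
      · exact mul_pos_of_neg_of_neg hb (by linarith)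
    have := Real.Gamma_pos_of_pos ha
    positivity
  · exact le_refl 0

lemma pearsonPDF_measurable {a b m : ℝ} (hb : b < 0) :
    Measurable (pearsonPDF a b m) := by
  rw [pearsonPDF_neg_eq_indicator hb]
  refine Measurable.indicator ?_ measurableSet_Iio
  apply Measurable.mul
  apply Measurable.mul measurable_const
  · exact ((measurable_id.sub_const m).const_mul b).pow_const _
  · exact (((measurable_id.sub_const m).const_mul b).neg).exp

lemma pearson_integral_exp {a b m : ℝ} (ha : 0 < a) (hb : b < 0) (n : ℕ) :
    ∫ x : ℝ, Real.exp (n * x) * pearsonPDF a b m x =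
      Real.exp (n * m) * (b / (b - n)) ^ a := by
  have hb0 : b ≠ 0 := ne_of_lt hb
  have hΓ : 0 < Real.Gamma a := Real.Gamma_pos_of_pos ha
  have hbn : b - (n : ℝ) < 0 := by
    have : (0:ℝ) ≤ n := Nat.cast_nonneg n
    linarith
  set r : ℝ := (b - n) / b with hrdef
  have hr : 0 < r := div_pos_of_neg_of_neg hbn hb
  set φ : ℝ → ℝ := Set.indicator (Ioi 0)
    (fun u => Real.exp (n * (m + u / b)) * (|b| / Real.Gamma a * u ^ (a - 1) * Real.exp (-u)))
    with hφdef
  have hstep : ∀ x : ℝ, Real.exp (n * x) * pearsonPDF a b m x = φ (b * (x - m)) := by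
    intro x
    by_cases h : x < m
    · have hpos : 0 < b * (x - m) := mul_pos_of_neg_of_neg hb (by linarith)
      rw [hφdef, Set.indicator_of_mem (mem_Ioi.mpr hpos)]
      have hx : m + b * (x - m) / b = x := by field_simp; ring
      rw [hx]
      unfold pearsonPDF
      rw [if_pos (Or.inr ⟨hb, h⟩)]
      try ring
    · have hnonpos : ¬ (0 < b * (x - m)) := by
        push_neg
        exact mul_nonpos_of_nonpos_of_nonneg (le_of_lt hb) (by linarith [not_lt.mp h])
      rw [hφdef, Set.indicator_of_notMem (fun hmem => hnonpos (mem_Ioi.mp hmem))]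
      unfold pearsonPDF
      rw [if_neg]
      · ring
      · rintro (⟨h1, _⟩ | ⟨_, h2⟩)
        · linarith
        · exact h h2
  simp_rw [hstep]
  have h1 : (∫ x : ℝ, φ (b * (x - m))) = ∫ x : ℝ, φ (b * x) :=
    integral_sub_right_eq_self (fun x => φ (b * x)) m
  rw [h1, Measure.integral_comp_mul_left φ b, hφdef, integral_indicator measurableSet_Ioi]
  have h2 : ∀ x ∈ Ioi (0:ℝ),
      Real.exp (n * (m + x / b)) * (|b| / Real.Gamma a * x ^ (a - 1) * Real.exp (-x)) =
      (Real.exp (n * m) * (|b| / Real.Gamma a)) * (x ^ (a - 1) * Real.exp (-(r * x))) := by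
    intro x hx
    have e1 : Real.exp ((n:ℝ) * (m + x / b)) = Real.exp ((n:ℝ) * m) * Real.exp ((n / b) * x) := by
      rw [← Real.exp_add]; congr 1; field_simp
    have e2 : Real.exp (-(r * x)) = Real.exp ((n / b) * x) * Real.exp (-x) := by
      rw [← Real.exp_add]; congr 1; rw [hrdef]; field_simp; ring
    rw [e1, e2]; ring
  rw [setIntegral_congr_fun measurableSet_Ioi h2, integral_const_mul,
    Real.integral_rpow_mul_exp_neg_mul_Ioi ha hr]
  have h3 : (1 / r) ^ a = (b / (b - n)) ^ a := by
    rw [hrdef, one_div_div]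
  rw [h3, smul_eq_mul, abs_inv]
  have hbne : |b| ≠ 0 := abs_ne_zero.mpr hb0
  field_simp

lemma pearson_moment_one {Ω : Type*} [MeasureSpace Ω] [IsProbabilityMeasure (ℙ : Measure Ω)]
    {a b m : ℝ} (ha : 0 < a) (hb : b < 0) {X : Ω → ℝ} (hX : Measurable X)
    (hlaw : Measure.map X ℙ = volume.withDensity fun x => ENNReal.ofReal (pearsonPDF a b m x))
    (n : ℕ) :
    ∫ ω, Real.exp (n * X ω) ∂ℙ = Real.exp (n * m) * (b / (b - n)) ^ a := by
  have hcont : Continuous fun x : ℝ => Real.exp (n * x) := by fun_prop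
  rw [← integral_map hX.aemeasurable hcont.aestronglyMeasurable, hlaw]
  have hdens : (fun x => ENNReal.ofReal (pearsonPDF a b m x)) =
      fun x => ((pearsonPDF a b m x).toNNReal : ENNReal) := rfl
  rw [hdens, integral_withDensity_eq_integral_smul (pearsonPDF_measurable hb).real_toNNReal]
  have hpt : ∀ x : ℝ, (pearsonPDF a b m x).toNNReal • Real.exp (n * x) =
      Real.exp (n * x) * pearsonPDF a b m x := by
    intro x
    rw [NNReal.smul_def, smul_eq_mul, Real.coe_toNNReal _ (pearsonPDF_nonneg ha x)]
    ring
  simp_rw [hpt]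
  exact pearson_integral_exp ha hb n

/-- **Moments of the log sum of Pearson type III RVs with common `b < 0`.**
With `sa = Σ a_i`, `sm = Σ m_i`, for every `n ∈ ℕ`,
`E[exp(n (X₁ + ⋯ + X_L))] = e^{n·sm} (b/(b-n))^{sa}`. -/
theorem logsum_pearsonIII_moments_neg {Ω : Type*} [MeasureSpace Ω]
    [IsProbabilityMeasure (ℙ : Measure Ω)] (L : ℕ) (hL : 1 ≤ L)
    (a m : Fin L → ℝ) (b : ℝ) (ha : ∀ i, 0 < a i) (hb : b < 0)
    (X : Fin L → Ω → ℝ) (hmeas : ∀ i, Measurable (X i))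
    (hindep : iIndepFun X ℙ)
    (hlaw : ∀ i, Measure.map (X i) ℙ =
      volume.withDensity fun x => ENNReal.ofReal (pearsonPDF (a i) b (m i) x))
    (n : ℕ) :
    ∫ ω, Real.exp (n * ∑ i, X i ω) ∂ℙ =
      Real.exp (n * ∑ i, m i) * (b / (b - n)) ^ (∑ i, a i) := by
  have hbn : b - (n : ℝ) < 0 := by
    have : (0:ℝ) ≤ n := Nat.cast_nonneg n
    linarith
  have hc : (0:ℝ) < b / (b - n) := div_pos_of_neg_of_neg hb hbn
  have lhs : (∫ ω, Real.exp (n * ∑ i, X i ω) ∂ℙ) = mgf (∑ i, X i) ℙ n := by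
    simp only [mgf, Finset.sum_apply]
  rw [lhs, hindep.mgf_sum hmeas Finset.univ]
  have hm : ∀ i, mgf (X i) ℙ (n : ℝ) = Real.exp (n * m i) * (b / (b - n)) ^ (a i) := by
    intro i
    simp only [mgf]
    exact pearson_moment_one (ha i) hb (hmeas i) (hlaw i) n
  rw [Finset.prod_congr rfl fun i _ => hm i, Finset.prod_mul_distrib, ← Real.exp_sum,
    ← Finset.mul_sum]
  congr 1
  simp_rw [Real.rpow_def_of_pos hc]
  rw [← Real.exp_sum, ← Finset.mul_sum]
end

section
/- Let a > 0, b > 0 and m ∈ ℝ, let X be a random variable following the Pearson type III distribution with parameters (a, b, m), and let Z = 1/(1 + e^{−X}). Then the law of Z is absolutely continuous with density f_Z(z; a, b, m) = (b e^{bm}/Γ(a)) (b(ln(z/(1 − z)) − m))^{a−1} z^{−b−1} (1 − z)^{b−1} for z ∈ (1/(1 + e^{−m}), 1), and density 0 elsewhere. -/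
open MeasureTheory ProbabilityTheory Set

noncomputable def logisticFn (x : ℝ) : ℝ := 1 / (1 + Real.exp (-x))

noncomputable def logitFn (z : ℝ) : ℝ := Real.log z - Real.log (1 - z)

lemma logistic_denom_pos (x : ℝ) : (0:ℝ) < 1 + Real.exp (-x) := by positivity

lemma logistic_mem_Ioo (x : ℝ) : logisticFn x ∈ Ioo (0:ℝ) 1 := by
  constructor
  · have := logistic_denom_pos x
    unfold logisticFn; positivity
  · unfold logisticFn
    rw [div_lt_one (logistic_denom_pos x)]
    linarith [Real.exp_pos (-x)]

lemma one_sub_logistic (x : ℝ) :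
    1 - logisticFn x = Real.exp (-x) / (1 + Real.exp (-x)) := by
  unfold logisticFn
  field_simp
  ring

lemma logit_logistic (x : ℝ) : logitFn (logisticFn x) = x := by
  unfold logitFn
  have h1 : Real.log (logisticFn x) = -Real.log (1 + Real.exp (-x)) := by
    unfold logisticFn
    rw [one_div, Real.log_inv]
  have h2 : Real.log (1 - logisticFn x) = -x - Real.log (1 + Real.exp (-x)) := by
    rw [one_sub_logistic, Real.log_div (Real.exp_ne_zero _) (logistic_denom_pos x).ne',
      Real.log_exp]
  rw [h1, h2]; ring

lemma logistic_logit {z : ℝ} (hz : z ∈ Ioo (0:ℝ) 1) : logisticFn (logitFn z) = z := by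
  obtain ⟨hz0, hz1⟩ := hz
  have h1z : (0:ℝ) < 1 - z := by linarith
  have hexp : Real.exp (-(logitFn z)) = (1 - z) / z := by
    unfold logitFn
    rw [neg_sub, Real.exp_sub, Real.exp_log h1z, Real.exp_log hz0]
  unfold logisticFn
  rw [hexp]
  field_simp
  ring

lemma logistic_strictMono : StrictMono logisticFn := by
  intro x y hxy
  unfold logisticFn
  apply div_lt_div_of_pos_left one_pos (logistic_denom_pos y)
  have := Real.exp_lt_exp.2 (neg_lt_neg hxy)
  linarith

lemma logistic_measurable : Measurable logisticFn := by
  unfold logisticFn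
  fun_prop

/-- **PDF of the logit Pearson type III distribution for `b > 0`.**
If `X ~ PearsonIII(a, b, m)` with `a, b > 0` and `Z = 1/(1 + e^{-X})`, then the law of
`Z` has density
`(b e^{bm}/Γ(a)) (b(ln(z/(1-z)) - m))^{a-1} z^{-b-1} (1-z)^{b-1}` on
`(1/(1 + e^{-m}), 1)`, and `0` elsewhere. -/
theorem logitPearsonIII_pdf_pos {Ω : Type*} [MeasureSpace Ω]
    [IsProbabilityMeasure (ℙ : Measure Ω)] (a b m : ℝ) (ha : 0 < a) (hb : 0 < b)
    (X : Ω → ℝ) (hX : Measurable X)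
    (hlaw : Measure.map X ℙ = volume.withDensity fun x => ENNReal.ofReal (pearsonPDF a b m x)) :
    Measure.map (fun ω => 1 / (1 + Real.exp (-X ω))) ℙ =
      volume.withDensity fun z =>
        ENNReal.ofReal
          (if 1 / (1 + Real.exp (-m)) < z ∧ z < 1 then
            b * Real.exp (b * m) / Real.Gamma a *
              (b * (Real.log (z / (1 - z)) - m)) ^ (a - 1) *
              z ^ (-b - 1) * (1 - z) ^ (b - 1)
          else 0) := by
  have hΓ : 0 < Real.Gamma a := Real.Gamma_pos_of_pos ha
  have hmap : Measure.map (fun ω => 1 / (1 + Real.exp (-X ω))) ℙ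
      = Measure.map logisticFn (Measure.map X ℙ) := by
    rw [Measure.map_map logistic_measurable hX]; rfl
  rw [hmap, hlaw]
  ext s hs
  rw [Measure.map_apply logistic_measurable hs,
    withDensity_apply _ (logistic_measurable hs), withDensity_apply _ hs]
  have hpre : logisticFn ⁻¹' s = logitFn '' (s ∩ Ioo 0 1) := by
    ext x
    constructor
    · intro hx
      exact ⟨logisticFn x, ⟨hx, logistic_mem_Ioo x⟩, logit_logistic x⟩
    · rintro ⟨z, ⟨hzs, hz01⟩, rfl⟩
      show logisticFn (logitFn z) ∈ s
      rw [logistic_logit hz01]; exact hzs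
  rw [hpre]
  have hsm : MeasurableSet (s ∩ Ioo (0:ℝ) 1) := hs.inter measurableSet_Ioo
  -- derivative of the logit
  have hderiv : ∀ z ∈ s ∩ Ioo (0:ℝ) 1,
      HasFDerivWithinAt logitFn
        ((1 : ℝ →L[ℝ] ℝ).smulRight (1/z + 1/(1-z))) (s ∩ Ioo (0:ℝ) 1) z := by
    intro z hz
    obtain ⟨_, hz0, hz1⟩ := hz
    have h1z : (0:ℝ) < 1 - z := by linarith
    apply HasDerivWithinAt.hasFDerivWithinAt
    have h1 : HasDerivAt Real.log z⁻¹ z := Real.hasDerivAt_log hz0.ne'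
    have hsub : HasDerivAt (fun w : ℝ => 1 - w) (-1) z := by
      simpa using (hasDerivAt_id z).const_sub 1
    have h2 : HasDerivAt (fun w : ℝ => Real.log (1 - w)) ((1 - z)⁻¹ * (-1)) z :=
      (Real.hasDerivAt_log h1z.ne').comp z hsub
    have h3 : HasDerivAt logitFn (z⁻¹ - (1 - z)⁻¹ * (-1)) z := by
      unfold logitFn
      exact (h1.sub h2)
    have : z⁻¹ - (1 - z)⁻¹ * (-1) = 1/z + 1/(1-z) := by ring
    rw [this] at h3
    exact h3.hasDerivWithinAt
  have hinj : InjOn logitFn (s ∩ Ioo (0:ℝ) 1) := by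
    intro x hx y hy hxy
    rw [← logistic_logit hx.2, ← logistic_logit hy.2, hxy]
  rw [lintegral_image_eq_lintegral_abs_det_fderiv_mul volume hsm hderiv hinj]
  simp only [ContinuousLinearMap.smulRight_one_eq_toSpanSingleton, ContinuousLinearMap.det_toSpanSingleton]
  have hLm : logisticFn m = 1 / (1 + Real.exp (-m)) := rfl
  have hLm0 : 0 < 1 / (1 + Real.exp (-m)) := by rw [← hLm]; exact (logistic_mem_Ioo m).1
  trans (∫⁻ z in s ∩ Ioo 0 1, ENNReal.ofReal
      (if 1 / (1 + Real.exp (-m)) < z ∧ z < 1 then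
        b * Real.exp (b * m) / Real.Gamma a *
          (b * (Real.log (z / (1 - z)) - m)) ^ (a - 1) *
          z ^ (-b - 1) * (1 - z) ^ (b - 1)
      else 0))
  · apply setLIntegral_congr_fun hsm
    rintro z ⟨_, hz0, hz1⟩
    beta_reduce
    have h1z : (0:ℝ) < 1 - z := by linarith
    have hG'pos : (0:ℝ) < 1/z + 1/(1-z) := by positivity
    rw [← ENNReal.ofReal_mul (abs_nonneg _)]
    congr 1
    have hmiff : m < logitFn z ↔ 1 / (1 + Real.exp (-m)) < z := by
      constructor
      · intro hmz
        have := logistic_strictMono hmz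
        rwa [logistic_logit ⟨hz0, hz1⟩, hLm] at this
      · intro hz'
        have h2 : logisticFn m < logisticFn (logitFn z) := by
          rwa [logistic_logit ⟨hz0, hz1⟩, hLm]
        exact logistic_strictMono.lt_iff_lt.mp h2
    by_cases hc : 1 / (1 + Real.exp (-m)) < z
    · rw [if_pos ⟨hc, hz1⟩]
      unfold pearsonPDF
      rw [if_pos (Or.inl ⟨hb, hmiff.mpr hc⟩)]
      rw [abs_of_pos hG'pos, abs_of_pos hb, Real.log_div hz0.ne' h1z.ne']
      unfold logitFn
      have e1 : Real.exp (-(b * ((Real.log z - Real.log (1-z)) - m)))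
          = Real.exp (b*m) * z ^ (-b) * (1-z) ^ b := by
        rw [Real.rpow_def_of_pos hz0, Real.rpow_def_of_pos h1z, ← Real.exp_add,
          ← Real.exp_add, Real.exp_eq_exp]
        ring
      have e2 : z ^ (-b - 1) = z ^ (-b) * z⁻¹ := by
        rw [show -b - 1 = -b + (-1) by ring, Real.rpow_add hz0, Real.rpow_neg_one]
      have e3 : (1 - z) ^ (b - 1) = (1-z) ^ b * (1-z)⁻¹ := by
        rw [show b - 1 = b + (-1) by ring, Real.rpow_add h1z, Real.rpow_neg_one]
      rw [e1, e2, e3]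
      field_simp
      ring
    · rw [if_neg (fun hcc => hc hcc.1)]
      unfold pearsonPDF
      rw [if_neg, mul_zero]
      rintro (⟨_, hmz⟩ | ⟨hb', _⟩)
      · exact hc (hmiff.mp hmz)
      · linarith
  · nth_rewrite 2 [← Set.inter_union_diff s (Ioo 0 1)]
    rw [lintegral_union (hs.diff measurableSet_Ioo)
      (disjoint_sdiff_self_right.mono_left inter_subset_right)]
    have hz0 : (∫⁻ z in s \ Ioo 0 1, ENNReal.ofReal
        (if 1 / (1 + Real.exp (-m)) < z ∧ z < 1 then
          b * Real.exp (b * m) / Real.Gamma a *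
            (b * (Real.log (z / (1 - z)) - m)) ^ (a - 1) *
            z ^ (-b - 1) * (1 - z) ^ (b - 1)
        else 0)) = 0 := by
      have heq : (∫⁻ z in s \ Ioo 0 1, ENNReal.ofReal
          (if 1 / (1 + Real.exp (-m)) < z ∧ z < 1 then
            b * Real.exp (b * m) / Real.Gamma a *
              (b * (Real.log (z / (1 - z)) - m)) ^ (a - 1) *
              z ^ (-b - 1) * (1 - z) ^ (b - 1)
          else 0)) = ∫⁻ _ in s \ Ioo 0 1, (0 : ENNReal) := by
        apply setLIntegral_congr_fun (hs.diff measurableSet_Ioo)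
        intro z hz
        beta_reduce
        rw [if_neg, ENNReal.ofReal_zero]
        rintro ⟨hc1, hc2⟩
        exact hz.2 ⟨lt_trans hLm0 hc1, hc2⟩
      rw [heq, lintegral_zero]
    rw [hz0, add_zero]
end

section
/- Let a > 0, b > 0 and m > 0, let X be a random variable following the Pearson type III distribution with parameters (a, b, m), and let Z = 1/(1 + e^{−X}). Then for every integer n ≥ 1, the series Σ_{l=0}^{∞} C(n + l − 1, l) (−1)^{l} e^{−m l} (1 + l/b)^{−a} converges absolutely and E[Z^n] = (1/Γ(a)) ∫_{0}^{∞} (1 + e^{−x/b − m})^{−n} x^{a−1} e^{−x} dx = Σ_{l=0}^{∞} C(n + l − 1, l) (−1)^{l} e^{−m l} (1 + l/b)^{−a}, where C(n + l − 1, l) is the binomial coefficient. -/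
open MeasureTheory ProbabilityTheory Set
open scoped ENNReal NNReal

lemma choose_shift (n l : ℕ) (hn : 1 ≤ n) :
    (n + l - 1).choose l = (l + (n - 1)).choose (n - 1) := by
  have h1 : n + l - 1 = l + (n - 1) := by omega
  rw [h1]
  have := Nat.choose_symm (n := l + (n - 1)) (k := n - 1) (Nat.le_add_left _ _)
  rwa [Nat.add_sub_cancel] at this

lemma exp_neg_pow (c : ℝ) (l : ℕ) : Real.exp (-(c * l)) = Real.exp (-c) ^ l := by
  rw [← Real.exp_nat_mul]; congr 1; ring

lemma logit_hasSum (n : ℕ) (hn : 1 ≤ n) {t : ℝ} (ht : 0 < t) :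
    HasSum (fun l : ℕ => ((n + l - 1).choose l : ℝ) * (-1) ^ l * Real.exp (-(t * l)))
      ((1 + Real.exp (-t)) ^ (-(n : ℤ))) := by
  have hr : ‖(-Real.exp (-t))‖ < 1 := by
    rw [norm_neg, Real.norm_eq_abs, abs_of_pos (Real.exp_pos _)]
    exact Real.exp_lt_one_iff.mpr (by linarith)
  have h := hasSum_choose_mul_geometric_of_norm_lt_one (𝕜 := ℝ) (n - 1) hr
  have hval : 1 / (1 - -Real.exp (-t)) ^ (n - 1 + 1) = (1 + Real.exp (-t)) ^ (-(n : ℤ)) := by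
    rw [sub_neg_eq_add, show n - 1 + 1 = n by omega, zpow_neg, zpow_natCast, one_div]
  rw [hval] at h
  convert h using 2 with l
  · rfl
  rw [choose_shift n l hn, exp_neg_pow, neg_pow]
  ring

lemma gamma_integrable {a : ℝ} (ha : 0 < a) {c : ℝ} (hc : 0 < c) :
    IntegrableOn (fun x : ℝ => x ^ (a - 1) * Real.exp (-(c * x))) (Ioi 0) := by
  have h := integrableOn_rpow_mul_exp_neg_mul_rpow (by linarith : (-1 : ℝ) < a - 1) zero_lt_one hc
  refine h.congr_fun (fun x _ => ?_) measurableSet_Ioi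
  beta_reduce
  rw [Real.rpow_one, neg_mul]

/-- **Moments of the logit Pearson type III distribution for `b > 0`, `m > 0`.**
If `X ~ PearsonIII(a, b, m)` and `Z = 1/(1 + e^{-X})`, then for every `n ≥ 1` the series
`Σ_{l=0}^∞ C(n+l-1, l) (-1)^l e^{-ml} (1 + l/b)^{-a}` converges absolutely and
`E[Z^n] = (1/Γ(a)) ∫_0^∞ (1 + e^{-x/b - m})^{-n} x^{a-1} e^{-x} dx
        = Σ_{l=0}^∞ C(n+l-1, l) (-1)^l e^{-ml} (1 + l/b)^{-a}`. -/
theorem logitPearsonIII_moments_pos {Ω : Type*} [MeasureSpace Ω]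
    [IsProbabilityMeasure (ℙ : Measure Ω)] (a b m : ℝ) (ha : 0 < a) (hb : 0 < b)
    (hm : 0 < m) (X : Ω → ℝ) (hX : Measurable X)
    (hlaw : Measure.map X ℙ = volume.withDensity fun x => ENNReal.ofReal (pearsonPDF a b m x))
    (n : ℕ) (hn : 1 ≤ n) :
    Summable (fun l : ℕ =>
      ((n + l - 1).choose l : ℝ) * (-1) ^ l * Real.exp (-(m * l)) * (1 + l / b) ^ (-a)) ∧
    ∫ ω, (1 / (1 + Real.exp (-X ω))) ^ n ∂ℙ =
      (1 / Real.Gamma a) *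
        ∫ x in Ioi (0 : ℝ),
          (1 + Real.exp (-x / b - m)) ^ (-(n : ℤ)) * x ^ (a - 1) * Real.exp (-x) ∧
    (1 / Real.Gamma a) *
        ∫ x in Ioi (0 : ℝ),
          (1 + Real.exp (-x / b - m)) ^ (-(n : ℤ)) * x ^ (a - 1) * Real.exp (-x) =
      ∑' l : ℕ,
        ((n + l - 1).choose l : ℝ) * (-1) ^ l * Real.exp (-(m * l)) * (1 + l / b) ^ (-a) := by
  have hΓ : 0 < Real.Gamma a := Real.Gamma_pos_of_pos ha
  set H : ℝ → ℝ :=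
    fun x => (1 + Real.exp (-x / b - m)) ^ (-(n : ℤ)) * x ^ (a - 1) * Real.exp (-x) with hHdef
  -- Part 1 : summability
  have hexpm : ‖Real.exp (-m)‖ < 1 := by
    rw [Real.norm_eq_abs, abs_of_pos (Real.exp_pos _)]
    exact Real.exp_lt_one_iff.mpr (by linarith)
  have hmaj : Summable (fun l : ℕ =>
      ((l + (n - 1)).choose (n - 1) : ℝ) * Real.exp (-m) ^ l) :=
    summable_choose_mul_geometric_of_norm_lt_one (n - 1) hexpm
  have hb_pos : ∀ l : ℕ, (0 : ℝ) < 1 + l / b := fun l => by positivity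
  have hrpow_le : ∀ l : ℕ, (1 + (l : ℝ) / b) ^ (-a) ≤ 1 := by
    intro l
    apply Real.rpow_le_one_of_one_le_of_nonpos
    · have : (0 : ℝ) ≤ (l : ℝ) / b := by positivity
      linarith
    · linarith
  have hbound : ∀ l : ℕ,
      ‖((n + l - 1).choose l : ℝ) * (-1) ^ l * Real.exp (-(m * l)) * (1 + l / b) ^ (-a)‖
        ≤ ((l + (n - 1)).choose (n - 1) : ℝ) * Real.exp (-m) ^ l := by
    intro l
    have h1 : (0 : ℝ) ≤ (1 + (l : ℝ) / b) ^ (-a) := (Real.rpow_pos_of_pos (hb_pos l) _).le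
    rw [norm_mul, norm_mul, norm_mul, norm_pow, norm_neg, norm_one, one_pow, mul_one,
      Real.norm_eq_abs, Real.norm_eq_abs, Real.norm_eq_abs, abs_of_nonneg h1,
      abs_of_pos (Real.exp_pos _), Nat.abs_cast, choose_shift n l hn, exp_neg_pow]
    have hcn : (0 : ℝ) ≤ ((l + (n - 1)).choose (n - 1) : ℝ) := Nat.cast_nonneg _
    calc ((l + (n - 1)).choose (n - 1) : ℝ) * Real.exp (-m) ^ l * (1 + l / b) ^ (-a)
        ≤ ((l + (n - 1)).choose (n - 1) : ℝ) * Real.exp (-m) ^ l * 1 := by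
          apply mul_le_mul_of_nonneg_left (hrpow_le l) (by positivity)
      _ = _ := by ring
  have hsum1 : Summable (fun l : ℕ =>
      ((n + l - 1).choose l : ℝ) * (-1) ^ l * Real.exp (-(m * l)) * (1 + l / b) ^ (-a)) :=
    Summable.of_norm_bounded hmaj hbound
  -- continuity / positivity facts
  have hpos1 : ∀ x : ℝ, (0 : ℝ) < 1 + Real.exp (-x) := fun x => by positivity
  have hgcont : Continuous fun x : ℝ => (1 / (1 + Real.exp (-x))) ^ n := by
    refine (continuous_const.div ?_ fun x => (hpos1 x).ne').pow n
    exact continuous_const.add (Real.continuous_exp.comp continuous_neg)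
  set g : ℝ → ℝ := fun x => (1 / (1 + Real.exp (-x))) ^ n with hgdef
  -- pdf as indicator
  set p : ℝ → ℝ :=
    fun x => b / Real.Gamma a * (b * (x - m)) ^ (a - 1) * Real.exp (-(b * (x - m))) with hpdefn
  have hpdf : pearsonPDF a b m = (Ioi m).indicator p := by
    ext x
    simp only [pearsonPDF, indicator, mem_Ioi]
    by_cases hx : m < x
    · rw [if_pos (Or.inl ⟨hb, hx⟩), if_pos hx, abs_of_pos hb]
    · rw [if_neg, if_neg hx]
      rintro (⟨_, h⟩ | ⟨h, _⟩)
      · exact hx h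
      · linarith
  have hpmeas : Measurable p := by
    rw [hpdefn]; fun_prop
  have hpdfmeas : Measurable (pearsonPDF a b m) := by
    rw [hpdf]; exact hpmeas.indicator measurableSet_Ioi
  have hpnonneg : ∀ x, 0 ≤ pearsonPDF a b m x := by
    intro x
    rw [hpdf]
    refine indicator_nonneg (fun y hy => ?_) x
    have hy' : 0 < b * (y - m) := by
      rw [mem_Ioi] at hy; have : 0 < y - m := by linarith
      positivity
    have : (0:ℝ) < (b * (y - m)) ^ (a - 1) := Real.rpow_pos_of_pos hy' _
    positivity
  -- Step 1 : transfer to ℝ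
  have step1 : ∫ ω, g (X ω) ∂ℙ = ∫ x, pearsonPDF a b m x * g x := by
    rw [← integral_map hX.aemeasurable hgcont.aestronglyMeasurable, hlaw]
    have heq : (fun x => ENNReal.ofReal (pearsonPDF a b m x))
        = fun x => ((pearsonPDF a b m x).toNNReal : ℝ≥0∞) := rfl
    rw [heq, integral_withDensity_eq_integral_smul hpdfmeas.real_toNNReal g]
    congr 1
    ext x
    rw [NNReal.smul_def, Real.coe_toNNReal _ (hpnonneg x), smul_eq_mul]
  -- Step 2 : restrict to Ioi m
  have step2 : ∫ x, pearsonPDF a b m x * g x = ∫ x in Ioi m, p x * g x := by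
    rw [hpdf, ← integral_indicator measurableSet_Ioi]
    congr 1
    ext x
    by_cases hx : x ∈ Ioi m <;> simp [hx]
  -- Step 3 : pointwise identification with H ∘ (affine map)
  have hg_zpow : ∀ x : ℝ, g x = (1 + Real.exp (-x)) ^ (-(n : ℤ)) := by
    intro x
    show (1 / (1 + Real.exp (-x))) ^ n = _
    rw [zpow_neg, zpow_natCast, div_pow, one_pow, one_div]
  have step3 : ∀ x ∈ Ioi m, p x * g x = (b / Real.Gamma a) * H (b * (x - m)) := by
    intro x _
    have harg : -(b * (x - m)) / b - m = -x := by field_simp; ring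
    rw [hpdefn, hg_zpow x, hHdef]
    simp only
    rw [harg]
    ring
  have step4 : ∫ x in Ioi m, p x * g x = (b / Real.Gamma a) * ∫ x in Ioi m, H (b * (x - m)) := by
    rw [← integral_const_mul]
    exact setIntegral_congr_fun measurableSet_Ioi step3
  -- Step 5 : change of variables
  have sub1 : ∫ x in Ioi m, H (b * (x - m)) = ∫ x in Ioi (0:ℝ), H (b * x) := by
    rw [← integral_indicator measurableSet_Ioi, ← integral_indicator measurableSet_Ioi]
    have key : ∀ x : ℝ, (Ioi m).indicator (fun y => H (b * (y - m))) x
        = (Ioi (0:ℝ)).indicator (fun y => H (b * y)) (x + -m) := by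
      intro x
      by_cases hx : m < x
      · rw [indicator_of_mem (mem_Ioi.mpr hx),
          indicator_of_mem (mem_Ioi.mpr (by linarith : (0:ℝ) < x + -m))]
        simp [sub_eq_add_neg]
      · rw [indicator_of_notMem (by simpa using hx),
          indicator_of_notMem (by simp [mem_Ioi]; linarith [not_lt.mp hx])]
    simp_rw [key]
    exact integral_add_right_eq_self _ (-m)
  have sub2 : ∫ x in Ioi (0:ℝ), H (b * x) = b⁻¹ * ∫ x in Ioi (0:ℝ), H x := by
    have h := integral_comp_mul_left_Ioi H 0 hb
    rwa [mul_zero, smul_eq_mul] at h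
  have part2 : ∫ ω, g (X ω) ∂ℙ = (1 / Real.Gamma a) * ∫ x in Ioi (0:ℝ), H x := by
    rw [step1, step2, step4, sub1, sub2, ← mul_assoc]
    congr 1
    field_simp
  -- Part 3 : series for the integral
  set F : ℕ → ℝ → ℝ := fun l x =>
    (((n + l - 1).choose l : ℝ) * (-1) ^ l * Real.exp (-(m * l))) *
      (x ^ (a - 1) * Real.exp (-((1 + l / b) * x))) with hFdef
  have hc_pos : ∀ l : ℕ, (0:ℝ) < 1 + l / b := hb_pos
  have hFsum : ∀ x ∈ Ioi (0:ℝ), HasSum (fun l => F l x) (H x) := by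
    intro x hx
    rw [mem_Ioi] at hx
    have ht : 0 < x / b + m := by positivity
    have h := (logit_hasSum n hn ht).mul_right (x ^ (a - 1) * Real.exp (-x))
    have harg : -x / b - m = -(x / b + m) := by ring
    have hH : H x = (1 + Real.exp (-(x / b + m))) ^ (-(n : ℤ)) * (x ^ (a-1) * Real.exp (-x)) := by
      rw [hHdef]; simp only; rw [harg]; ring
    rw [hH]
    convert h using 2 with l
    · rfl
    rw [hFdef]
    simp only
    rw [show -((x / b + m) * l) = -(m * l) + -(l / b * x) by ring, Real.exp_add,
      show -((1 + l / b) * x) = -(l/b*x) + -x by ring, Real.exp_add]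
    ring
  have hFint : ∀ l : ℕ, IntegrableOn (F l) (Ioi 0) := by
    intro l
    exact (gamma_integrable ha (hc_pos l)).const_mul _
  have hFnormval : ∀ l : ℕ, ∫ x in Ioi (0:ℝ), ‖F l x‖ =
      ((n + l - 1).choose l : ℝ) * Real.exp (-(m * l)) *
        ((1 / (1 + l / b)) ^ a * Real.Gamma a) := by
    intro l
    have hcongr : ∀ x ∈ Ioi (0:ℝ), ‖F l x‖ =
        (((n + l - 1).choose l : ℝ) * Real.exp (-(m * l))) *
          (x ^ (a - 1) * Real.exp (-((1 + l / b) * x))) := by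
      intro x hx
      rw [mem_Ioi] at hx
      have h1 : (0:ℝ) ≤ x ^ (a - 1) := (Real.rpow_pos_of_pos hx _).le
      rw [hFdef]
      simp only
      rw [norm_mul, norm_mul, norm_mul, norm_mul, norm_pow, norm_neg, norm_one, one_pow, mul_one,
        Real.norm_eq_abs, Real.norm_eq_abs, Real.norm_eq_abs, Real.norm_eq_abs,
        abs_of_nonneg h1, abs_of_pos (Real.exp_pos _), abs_of_pos (Real.exp_pos _), Nat.abs_cast]
    rw [setIntegral_congr_fun measurableSet_Ioi hcongr, integral_const_mul,
      Real.integral_rpow_mul_exp_neg_mul_Ioi ha (hc_pos l)]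
  have hFval : ∀ l : ℕ, ∫ x in Ioi (0:ℝ), F l x =
      (((n + l - 1).choose l : ℝ) * (-1) ^ l * Real.exp (-(m * l))) *
        ((1 / (1 + l / b)) ^ a * Real.Gamma a) := by
    intro l
    rw [hFdef]
    simp only
    rw [integral_const_mul, Real.integral_rpow_mul_exp_neg_mul_Ioi ha (hc_pos l)]
  have hnormsum : Summable (fun l : ℕ => ∫ x in Ioi (0:ℝ), ‖F l x‖) := by
    refine Summable.of_nonneg_of_le
      (fun l => integral_nonneg fun x => norm_nonneg _)
      (fun l => ?_) (hmaj.mul_right (Real.Gamma a))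
    · rw [hFnormval l]
      have h1 : (1 / (1 + (l:ℝ) / b)) ^ a ≤ 1 := by
        apply Real.rpow_le_one (by positivity) _ ha.le
        rw [div_le_one (hc_pos l)]
        have : (0:ℝ) ≤ (l:ℝ) / b := by positivity
        linarith
      have h2 : (0:ℝ) ≤ ((n + l - 1).choose l : ℝ) * Real.exp (-(m * l)) := by positivity
      calc ((n + l - 1).choose l : ℝ) * Real.exp (-(m * l)) *
            ((1 / (1 + l / b)) ^ a * Real.Gamma a)
          ≤ ((n + l - 1).choose l : ℝ) * Real.exp (-(m * l)) * (1 * Real.Gamma a) := by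
            apply mul_le_mul_of_nonneg_left (mul_le_mul_of_nonneg_right h1 hΓ.le) h2
        _ = ((l + (n - 1)).choose (n - 1) : ℝ) * Real.exp (-m) ^ l * Real.Gamma a := by
            rw [choose_shift n l hn, exp_neg_pow]; ring
  have hswap : ∑' l, ∫ x in Ioi (0:ℝ), F l x = ∫ x in Ioi (0:ℝ), ∑' l, F l x :=
    integral_tsum_of_summable_integral_norm hFint hnormsum
  have hHint : ∫ x in Ioi (0:ℝ), ∑' l, F l x = ∫ x in Ioi (0:ℝ), H x :=
    setIntegral_congr_fun measurableSet_Ioi fun x hx => (hFsum x hx).tsum_eq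
  have part3 : (1 / Real.Gamma a) * ∫ x in Ioi (0:ℝ), H x =
      ∑' l : ℕ, ((n + l - 1).choose l : ℝ) * (-1) ^ l * Real.exp (-(m * l)) *
        (1 + l / b) ^ (-a) := by
    rw [← hHint, ← hswap, ← tsum_mul_left]
    congr 1
    ext l
    rw [hFval l]
    have hrw : (1 / (1 + (l:ℝ) / b)) ^ a = (1 + (l:ℝ) / b) ^ (-a) := by
      rw [one_div, Real.inv_rpow (hc_pos l).le, ← Real.rpow_neg (hc_pos l).le]
    rw [hrw]
    field_simp
  exact ⟨hsum1, part2, part3⟩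
end

section
/- Let L ≥ 1 and let X_1, …, X_L be independent random variables such that X_i follows the Pearson type III distribution with parameters (a_i, b, m_i), where a_i > 0 for all i and b > 0 is common to all the X_i. Set sa = Σ_{i=1}^{L} a_i and sm = Σ_{i=1}^{L} m_i, and let SZ = 1/(1 + e^{−(X_1 + ⋯ + X_L)}). Then for every z with 1/(1 + e^{−sm}) < z < 1, P(SZ ≤ z) = (1/Γ(sa)) γ(sa, b(ln(z/(1 − z)) − sm)), where γ(a, u) = ∫_0^u t^{a−1} e^{−t} dt is the lower incomplete gamma function. -/
open MeasureTheory ProbabilityTheory Set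

section LogitPearsonAux

open intervalIntegral
open scoped ENNReal NNReal

lemma betaInt_intble {s t w : ℝ} (hs : 0 < s) (ht : 0 < t) (hw : 0 < w) :
    IntervalIntegrable (fun x => x ^ (s - 1) * (w - x) ^ (t - 1)) volume 0 w := by
  have h1 : IntervalIntegrable (fun x : ℝ => x ^ (s - 1) * (w - x) ^ (t - 1)) volume 0 (w / 2) := by
    refine (intervalIntegrable_rpow' (by linarith)).mul_continuousOn ?_
    refine ContinuousOn.rpow_const (by fun_prop) fun x hx => Or.inl ?_
    rw [uIcc_of_le (by linarith)] at hx
    have := hx.2; intro h; linarith [sub_eq_zero.mp h]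
  have h2 : IntervalIntegrable (fun x : ℝ => x ^ (s - 1) * (w - x) ^ (t - 1)) volume (w / 2) w := by
    have h3 : IntervalIntegrable (fun x : ℝ => (w - x) ^ (t - 1)) volume (w / 2) w := by
      have := (intervalIntegrable_rpow' (r := t - 1) (a := 0) (b := w / 2)
        (by linarith)).comp_sub_left w
      have h4 := this.symm
      simpa [show w - w/2 = w/2 by ring] using h4
    refine h3.continuousOn_mul ?_
    refine ContinuousOn.rpow_const (by fun_prop) fun x hx => Or.inl ?_
    rw [uIcc_of_le (by linarith)] at hx
    have := hx.1; intro h; rw [h] at this; linarith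
  exact h1.trans h2

lemma beta_real_scaled {s t w : ℝ} (hs : 0 < s) (ht : 0 < t) (hw : 0 < w) :
    ∫ x in (0:ℝ)..w, x ^ (s - 1) * (w - x) ^ (t - 1)
      = w ^ (s + t - 1) * (Real.Gamma s * Real.Gamma t / Real.Gamma (s + t)) := by
  have hC : ∫ x in (0:ℝ)..w, (x : ℂ) ^ ((s:ℂ) - 1) * ((w : ℂ) - x) ^ ((t:ℂ) - 1)
      = (w : ℂ) ^ ((s:ℂ) + t - 1) * Complex.betaIntegral s t :=
    Complex.betaIntegral_scaled s t hw
  have hG : Complex.Gamma s * Complex.Gamma t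
      = Complex.Gamma ((s:ℂ) + t) * Complex.betaIntegral s t :=
    Complex.Gamma_mul_Gamma_eq_betaIntegral (by simpa using hs) (by simpa using ht)
  have hGne : Complex.Gamma ((s:ℂ) + t) ≠ 0 := by
    rw [show ((s:ℂ) + t) = ((s + t : ℝ) : ℂ) by push_cast; ring, Complex.Gamma_ofReal]
    exact_mod_cast (Real.Gamma_pos_of_pos (by linarith)).ne'
  have hbeta : Complex.betaIntegral s t
      = Complex.Gamma s * Complex.Gamma t / Complex.Gamma ((s:ℂ) + t) := by
    field_simp [hG]
    rw [hG]; ring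
  -- rewrite the complex integral as coe of real integral
  have key : ((∫ x in (0:ℝ)..w, x ^ (s - 1) * (w - x) ^ (t - 1) : ℝ) : ℂ)
      = ∫ x in (0:ℝ)..w, (x : ℂ) ^ ((s:ℂ) - 1) * ((w : ℂ) - x) ^ ((t:ℂ) - 1) := by
    rw [← intervalIntegral.integral_ofReal]
    refine intervalIntegral.integral_congr fun x hx => ?_
    rw [uIcc_of_le hw.le] at hx
    rw [show ((s:ℂ) - 1) = ((s - 1 : ℝ) : ℂ) by push_cast; ring,
      show ((t:ℂ) - 1) = ((t - 1 : ℝ) : ℂ) by push_cast; ring,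
      show ((w:ℂ) - (x:ℂ)) = ((w - x : ℝ) : ℂ) by push_cast; ring,
      ← Complex.ofReal_cpow hx.1, ← Complex.ofReal_cpow (by linarith [hx.2]),
      ← Complex.ofReal_mul]
  have := key.trans hC
  rw [hbeta] at this
  have hrw : ((w : ℂ) ^ ((s:ℂ) + t - 1) * (Complex.Gamma s * Complex.Gamma t /
      Complex.Gamma ((s:ℂ) + t)))
      = ((w ^ (s + t - 1) * (Real.Gamma s * Real.Gamma t / Real.Gamma (s + t)) : ℝ) : ℂ) := by
    rw [show ((s:ℂ) + t - 1) = ((s + t - 1 : ℝ) : ℂ) by push_cast; ring,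
      ← Complex.ofReal_cpow hw.le,
      show ((s:ℂ) + t) = ((s + t : ℝ) : ℂ) by push_cast; ring]
    rw [Complex.Gamma_ofReal, Complex.Gamma_ofReal, Complex.Gamma_ofReal]
    push_cast; ring
  rw [hrw] at this
  exact_mod_cast this

noncomputable def sgPDF (a b m : ℝ) : ℝ → ℝ≥0∞ :=
  fun x => ENNReal.ofReal (gammaPDFReal a b (x - m))

lemma sgPDF_measurable (a b m : ℝ) : Measurable (sgPDF a b m) :=
  (ENNReal.measurable_ofReal.comp (measurable_gammaPDFReal a b)).comp
    (measurable_id.sub measurable_const)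

lemma sgPDF_conv_pointwise {a1 a2 b m1 m2 : ℝ} (ha1 : 0 < a1) (ha2 : 0 < a2)
    (hb : 0 < b) {u : ℝ} (hu : u ≠ m1 + m2) :
    ∫⁻ x, sgPDF a1 b m1 x * sgPDF a2 b m2 (u - x) = sgPDF (a1 + a2) b (m1 + m2) u := by
  have hΓ1 := Real.Gamma_pos_of_pos ha1
  have hΓ2 := Real.Gamma_pos_of_pos ha2
  have hΓ12 := Real.Gamma_pos_of_pos (by linarith : (0:ℝ) < a1 + a2)
  -- translate by m1
  have htrans : ∫⁻ x, sgPDF a1 b m1 x * sgPDF a2 b m2 (u - x)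
      = ∫⁻ x, ENNReal.ofReal (gammaPDFReal a1 b x)
          * ENNReal.ofReal (gammaPDFReal a2 b ((u - m1 - m2) - x)) := by
    rw [← lintegral_add_right_eq_self
      (fun x => sgPDF a1 b m1 x * sgPDF a2 b m2 (u - x)) m1]
    refine lintegral_congr fun x => ?_
    simp only [sgPDF]
    congr 2
    · ring
    · ring
  rw [htrans]
  set w := u - m1 - m2 with hw_def
  rcases lt_or_gt_of_ne (show w ≠ 0 by intro h; apply hu; simp [hw_def] at h; linarith) with hw | hw
  · -- w < 0 : both sides vanish
    have h0 : ∀ x : ℝ, ENNReal.ofReal (gammaPDFReal a1 b x)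
        * ENNReal.ofReal (gammaPDFReal a2 b (w - x)) = 0 := by
      intro x
      rcases lt_or_ge x 0 with hx | hx
      · rw [show gammaPDFReal a1 b x = 0 by simp [gammaPDFReal, not_le.mpr hx]]
        simp
      · rw [show gammaPDFReal a2 b (w - x) = 0 by
          simp [gammaPDFReal, not_le.mpr (by linarith : w - x < 0)]]
        simp
    simp only [h0, lintegral_zero]
    rw [sgPDF, show gammaPDFReal (a1 + a2) b (u - (m1 + m2)) = 0 by
      simp [gammaPDFReal, not_le.mpr (show u - (m1+m2) < 0 by simp [hw_def] at hw; linarith)]]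
    simp
  · -- w > 0 : beta computation
    have hG : ∀ x : ℝ, ENNReal.ofReal (gammaPDFReal a1 b x)
        * ENNReal.ofReal (gammaPDFReal a2 b (w - x))
        = ENNReal.ofReal (gammaPDFReal a1 b x * gammaPDFReal a2 b (w - x)) := by
      intro x
      rw [ENNReal.ofReal_mul (gammaPDFReal_nonneg ha1 hb x)]
    simp only [hG]
    set C : ℝ := b ^ a1 / Real.Gamma a1 * (b ^ a2 / Real.Gamma a2) * Real.exp (-(b * w)) with hC
    have hEq : ∀ x ∈ Ioo (0:ℝ) w, gammaPDFReal a1 b x * gammaPDFReal a2 b (w - x)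
        = C * (x ^ (a1 - 1) * (w - x) ^ (a2 - 1)) := by
      intro x hx
      rw [gammaPDFReal, gammaPDFReal, if_pos hx.1.le, if_pos (by linarith [hx.2] : (0:ℝ) ≤ w - x)]
      have hexp : Real.exp (-(b * x)) * Real.exp (-(b * (w - x))) = Real.exp (-(b * w)) := by
        rw [← Real.exp_add]; ring_nf
      rw [hC, ← hexp]; ring
    -- drop to the interval
    have hzero : ∀ x : ℝ, x ∉ Icc (0:ℝ) w →
        gammaPDFReal a1 b x * gammaPDFReal a2 b (w - x) = 0 := by
      intro x hx
      rw [mem_Icc, not_and_or] at hx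
      rcases hx with hx | hx
      · rw [show gammaPDFReal a1 b x = 0 by simp [gammaPDFReal, hx]]; ring
      · rw [show gammaPDFReal a2 b (w - x) = 0 by
          simp [gammaPDFReal, not_le.mpr (by push_neg at hx; linarith : w - x < 0)]]; ring
    have hae : ∀ᵐ x : ℝ, ENNReal.ofReal (gammaPDFReal a1 b x * gammaPDFReal a2 b (w - x))
        = (Ioo (0:ℝ) w).indicator
            (fun x => ENNReal.ofReal (gammaPDFReal a1 b x * gammaPDFReal a2 b (w - x))) x := by
      have h1 : ∀ᵐ x : ℝ, x ∉ ({0, w} : Set ℝ) :=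
        measure_eq_zero_iff_ae_notMem.mp (measure_union_null (measure_singleton 0)
          (measure_singleton w))
      filter_upwards [h1] with x hx
      simp only [mem_insert_iff, mem_singleton_iff, not_or] at hx
      by_cases hxI : x ∈ Ioo (0:ℝ) w
      · rw [indicator_of_mem hxI]
      · rw [indicator_of_notMem hxI, hzero x, ENNReal.ofReal_zero]
        intro hmem
        rcases hmem with ⟨h0, hw'⟩
        exact hxI ⟨h0.lt_of_ne (Ne.symm hx.1), hw'.lt_of_ne hx.2⟩
    rw [lintegral_congr_ae hae, lintegral_indicator measurableSet_Ioo _]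
    have hint : IntegrableOn (fun x : ℝ => C * (x ^ (a1 - 1) * (w - x) ^ (a2 - 1)))
        (Ioo 0 w) volume := by
      have := ((intervalIntegrable_iff_integrableOn_Ioc_of_le hw.le).mp
        (betaInt_intble ha1 ha2 hw)).mono_set Ioo_subset_Ioc_self
      exact this.const_mul C
    have hint2 : IntegrableOn (fun x : ℝ => gammaPDFReal a1 b x * gammaPDFReal a2 b (w - x))
        (Ioo 0 w) volume :=
      hint.congr_fun (fun x hx => (hEq x hx).symm) measurableSet_Ioo
    rw [← ofReal_integral_eq_lintegral_ofReal hint2 (ae_restrict_of_ae (Filter.Eventually.of_forall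
      (fun x => mul_nonneg (gammaPDFReal_nonneg ha1 hb x) (gammaPDFReal_nonneg ha2 hb _))))]
    rw [setIntegral_congr_fun measurableSet_Ioo hEq, MeasureTheory.integral_const_mul,
      ← integral_Ioc_eq_integral_Ioo, ← intervalIntegral.integral_of_le hw.le,
      beta_real_scaled ha1 ha2 hw]
    rw [sgPDF, show u - (m1 + m2) = w by rw [hw_def]; ring, gammaPDFReal, if_pos hw.le]
    congr 1
    rw [hC, Real.rpow_add hb]
    field_simp

lemma sg_conv {a1 a2 b m1 m2 : ℝ} (ha1 : 0 < a1) (ha2 : 0 < a2) (hb : 0 < b) :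
    Measure.map (fun p : ℝ × ℝ => p.1 + p.2)
      ((volume.withDensity (sgPDF a1 b m1)).prod (volume.withDensity (sgPDF a2 b m2)))
      = volume.withDensity (sgPDF (a1 + a2) b (m1 + m2)) := by
  have hg1 := sgPDF_measurable a1 b m1
  have hg2 := sgPDF_measurable a2 b m2
  ext s hs
  rw [Measure.map_apply measurable_add hs, Measure.prod_apply (measurable_add hs)]
  have inner : ∀ x : ℝ, (volume.withDensity (sgPDF a2 b m2))
        (Prod.mk x ⁻¹' ((fun p : ℝ × ℝ => p.1 + p.2) ⁻¹' s))
      = ∫⁻ u, s.indicator (fun u => sgPDF a2 b m2 (u - x)) u := by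
    intro x
    have hpre : (Prod.mk x ⁻¹' ((fun p : ℝ × ℝ => p.1 + p.2) ⁻¹' s))
        = (fun y => x + y) ⁻¹' s := rfl
    rw [hpre, withDensity_apply _ (hs.preimage (measurable_const_add x)),
      ← lintegral_indicator (hs.preimage (measurable_const_add x))]
    rw [← lintegral_add_left_eq_self (fun u => s.indicator (fun u => sgPDF a2 b m2 (u - x)) u) x]
    refine lintegral_congr fun y => ?_
    by_cases hy : x + y ∈ s
    · rw [indicator_of_mem hy, indicator_of_mem (mem_preimage.mpr hy)]
      simp
    · rw [indicator_of_notMem hy, indicator_of_notMem (fun h => hy (mem_preimage.mp h))]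
  simp_rw [inner]
  have hK : Measurable (fun p : ℝ × ℝ => s.indicator
      (fun u => sgPDF a2 b m2 (u - p.1)) p.2) := by
    have : (fun p : ℝ × ℝ => s.indicator (fun u => sgPDF a2 b m2 (u - p.1)) p.2)
        = fun p : ℝ × ℝ => ((univ : Set ℝ) ×ˢ s).indicator
            (fun p : ℝ × ℝ => sgPDF a2 b m2 (p.2 - p.1)) p := by
      funext p
      by_cases hp : p.2 ∈ s
      · rw [indicator_of_mem hp, indicator_of_mem (by simp [hp])]
      · rw [indicator_of_notMem hp, indicator_of_notMem (by simp [hp])]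
    rw [this]
    exact (hg2.comp (measurable_snd.sub measurable_fst)).indicator
      (MeasurableSet.univ.prod hs)
  rw [lintegral_withDensity_eq_lintegral_mul volume hg1 hK.lintegral_prod_right']
  simp only [Pi.mul_apply]
  have hswap : ∫⁻ x, sgPDF a1 b m1 x * ∫⁻ u, s.indicator (fun u => sgPDF a2 b m2 (u - x)) u
      = ∫⁻ u, ∫⁻ x, sgPDF a1 b m1 x * s.indicator (fun u => sgPDF a2 b m2 (u - x)) u := by
    rw [← lintegral_lintegral_swap]
    · refine lintegral_congr fun x => ?_
      exact (lintegral_const_mul _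
        ((hg2.comp (measurable_id.sub measurable_const)).indicator hs)).symm
    · exact ((hg1.comp measurable_fst).mul hK).aemeasurable
  rw [hswap]
  have hind : ∀ u : ℝ, ∫⁻ x, sgPDF a1 b m1 x * s.indicator (fun u => sgPDF a2 b m2 (u - x)) u
      = s.indicator (fun u => ∫⁻ x, sgPDF a1 b m1 x * sgPDF a2 b m2 (u - x)) u := by
    intro u
    by_cases hu : u ∈ s
    · simp only [indicator_of_mem hu]
    · simp only [indicator_of_notMem hu, mul_zero, lintegral_zero]
  simp_rw [hind]
  have hae : ∀ᵐ u : ℝ, s.indicator (fun u => ∫⁻ x, sgPDF a1 b m1 x * sgPDF a2 b m2 (u - x)) u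
      = s.indicator (sgPDF (a1 + a2) b (m1 + m2)) u := by
    have h1 : ∀ᵐ u : ℝ, u ≠ m1 + m2 :=
      measure_eq_zero_iff_ae_notMem.mp (measure_singleton (m1 + m2))
    filter_upwards [h1] with u hu
    by_cases hus : u ∈ s
    · rw [indicator_of_mem hus, indicator_of_mem hus, sgPDF_conv_pointwise ha1 ha2 hb hu]
    · rw [indicator_of_notMem hus, indicator_of_notMem hus]
  rw [lintegral_congr_ae hae, lintegral_indicator hs, withDensity_apply _ hs]

lemma sg_cdf {sa b sm c : ℝ} (hsa : 0 < sa) (hb : 0 < b) (hc : sm < c) :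
    ∫⁻ x in Iic c, sgPDF sa b sm x
      = ENNReal.ofReal ((1 / Real.Gamma sa) *
          ∫ t in (0:ℝ)..(b * (c - sm)), t ^ (sa - 1) * Real.exp (-t)) := by
  have hΓ := Real.Gamma_pos_of_pos hsa
  set w := c - sm with hw_def
  have hw : 0 < w := by simp [hw_def]; linarith
  -- translation
  have htrans : ∫⁻ x in Iic c, sgPDF sa b sm x
      = ∫⁻ x in Iic w, ENNReal.ofReal (gammaPDFReal sa b x) := by
    rw [← lintegral_indicator measurableSet_Iic, ← lintegral_indicator measurableSet_Iic,
      ← lintegral_sub_right_eq_self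
        (fun x => (Iic w).indicator (fun x => ENNReal.ofReal (gammaPDFReal sa b x)) x) sm]
    refine lintegral_congr fun x => ?_
    by_cases hx : x ≤ c
    · rw [indicator_of_mem (mem_Iic.mpr hx),
        indicator_of_mem (mem_Iic.mpr (by simp [hw_def]; linarith : x - sm ≤ w))]
      rfl
    · push_neg at hx
      rw [indicator_of_notMem (by simp; linarith),
        indicator_of_notMem (by simp [hw_def]; linarith)]
  rw [htrans]
  -- split
  have hsplit : (Iic w : Set ℝ) = Iio 0 ∪ Icc 0 w := by
    ext x; simp only [mem_Iic, mem_union, mem_Iio, mem_Icc]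
    constructor
    · intro h; rcases lt_or_ge x 0 with h0 | h0
      · exact Or.inl h0
      · exact Or.inr ⟨h0, h⟩
    · rintro (h | h)
      · linarith
      · exact h.2
  rw [hsplit, lintegral_union measurableSet_Icc (by
    refine disjoint_left.mpr fun x hx hx2 => ?_
    exact absurd hx2.1 (not_le.mpr hx))]
  have hzero : ∫⁻ x in Iio (0:ℝ), ENNReal.ofReal (gammaPDFReal sa b x) = 0 := by
    have h0 : ∀ᵐ x ∂(volume.restrict (Iio (0:ℝ))), ENNReal.ofReal (gammaPDFReal sa b x) = 0 :=
      (ae_restrict_iff' measurableSet_Iio).mpr (ae_of_all _ fun x hx => by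
        simp [gammaPDFReal, not_le.mpr (mem_Iio.mp hx)])
    rw [lintegral_congr_ae h0, lintegral_zero]
  rw [hzero, zero_add, ← Measure.restrict_congr_set Ioc_ae_eq_Icc]
  -- to Bochner integral
  have hII : IntervalIntegrable (fun x : ℝ => b ^ sa / Real.Gamma sa *
      (x ^ (sa - 1) * Real.exp (-(b * x)))) volume 0 w := by
    refine IntervalIntegrable.const_mul ?_ _
    exact (intervalIntegrable_rpow' (by linarith)).mul_continuousOn (by fun_prop)
  have hint : IntegrableOn (gammaPDFReal sa b) (Ioc 0 w) volume := by
    refine (((intervalIntegrable_iff_integrableOn_Ioc_of_le hw.le).mp hII)).congr_fun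
      (fun x hx => ?_) measurableSet_Ioc
    rw [gammaPDFReal, if_pos hx.1.le]; ring
  rw [← ofReal_integral_eq_lintegral_ofReal hint (ae_restrict_of_ae (Filter.Eventually.of_forall
    (fun x => gammaPDFReal_nonneg hsa hb x)))]
  congr 1
  rw [← intervalIntegral.integral_of_le hw.le]
  have hleft : ∫ x in (0:ℝ)..w, gammaPDFReal sa b x
      = b ^ sa / Real.Gamma sa * ∫ x in (0:ℝ)..w, x ^ (sa - 1) * Real.exp (-(b * x)) := by
    rw [← intervalIntegral.integral_const_mul]
    refine intervalIntegral.integral_congr fun x hx => ?_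
    rw [uIcc_of_le hw.le] at hx
    rw [gammaPDFReal, if_pos hx.1]; ring
  rw [hleft]
  -- substitution on the RHS
  have hsub : ∫ t in (0:ℝ)..(b * w), t ^ (sa - 1) * Real.exp (-t)
      = b * ∫ x in (0:ℝ)..w, (b * x) ^ (sa - 1) * Real.exp (-(b * x)) := by
    rw [show (0:ℝ) = b * 0 by ring]
    rw [← intervalIntegral.smul_integral_comp_mul_left
      (fun t => t ^ (sa - 1) * Real.exp (-t)) b]
    simp [smul_eq_mul]
  rw [hsub]
  have hcongr : ∫ x in (0:ℝ)..w, (b * x) ^ (sa - 1) * Real.exp (-(b * x))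
      = b ^ (sa - 1) * ∫ x in (0:ℝ)..w, x ^ (sa - 1) * Real.exp (-(b * x)) := by
    rw [← intervalIntegral.integral_const_mul]
    refine intervalIntegral.integral_congr fun x hx => ?_
    rw [uIcc_of_le hw.le] at hx
    rw [Real.mul_rpow hb.le hx.1]; ring
  rw [hcongr]
  have hbb : b * b ^ (sa - 1) = b ^ sa := by
    have h2 := Real.rpow_add hb 1 (sa - 1)
    rw [Real.rpow_one] at h2
    rw [← h2]; norm_num
  rw [← hbb]; ring

lemma pearson_ae_sg {a b m : ℝ} (ha : 0 < a) (hb : 0 < b) :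
    (fun x => ENNReal.ofReal (pearsonPDF a b m x)) =ᵐ[volume] sgPDF a b m := by
  have h1 : ∀ᵐ x : ℝ, x ≠ m := measure_eq_zero_iff_ae_notMem.mp (measure_singleton m)
  filter_upwards [h1] with x hx
  rcases lt_or_gt_of_ne hx with hlt | hgt
  · rw [pearsonPDF, if_neg (by
      rintro (⟨_, h⟩ | ⟨h, _⟩)
      · linarith
      · linarith), sgPDF, show gammaPDFReal a b (x - m) = 0 by
        simp [gammaPDFReal, not_le.mpr (by linarith : x - m < 0)]]
  · rw [pearsonPDF, if_pos (Or.inl ⟨hb, hgt⟩), sgPDF, gammaPDFReal,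
      if_pos (by linarith : (0:ℝ) ≤ x - m)]
    congr 1
    rw [abs_of_pos hb, Real.mul_rpow hb.le (by linarith : (0:ℝ) ≤ x - m)]
    have hbb : b * b ^ (a - 1) = b ^ a := by
      have h2 := Real.rpow_add hb 1 (a - 1)
      rw [Real.rpow_one] at h2
      rw [← h2]; norm_num
    rw [← hbb]; ring

lemma map_sum_sg {Ω : Type*} [MeasureSpace Ω] [IsProbabilityMeasure (ℙ : Measure Ω)]
    {L : ℕ} (a m : Fin L → ℝ) (b : ℝ) (ha : ∀ i, 0 < a i) (hb : 0 < b)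
    (X : Fin L → Ω → ℝ) (hmeas : ∀ i, Measurable (X i))
    (hindep : iIndepFun X ℙ)
    (hlaw : ∀ i, Measure.map (X i) ℙ = volume.withDensity (sgPDF (a i) b (m i)))
    (s : Finset (Fin L)) (hs : s.Nonempty) :
    Measure.map (fun ω => ∑ i ∈ s, X i ω) ℙ
      = volume.withDensity (sgPDF (∑ i ∈ s, a i) b (∑ i ∈ s, m i)) := by
  induction hs using Finset.Nonempty.cons_induction with
  | singleton i => simpa using hlaw i
  | cons i s hi hs ih =>
    have hT : Measurable (fun ω => ∑ j ∈ s, X j ω) :=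
      Finset.measurable_sum s (fun j _ => hmeas j)
    have hInd : IndepFun (X i) (fun ω => ∑ j ∈ s, X j ω) ℙ := by
      have h := (hindep.indepFun_finset_sum_of_notMem hmeas hi).symm
      have hfs : (∑ j ∈ s, X j) = fun ω => ∑ j ∈ s, X j ω := by
        funext ω; exact Finset.sum_apply ω s X
      rwa [hfs] at h
    have hpair : Measure.map (fun ω => (X i ω, ∑ j ∈ s, X j ω)) ℙ
        = (Measure.map (X i) ℙ).prod (Measure.map (fun ω => ∑ j ∈ s, X j ω) ℙ) :=
      (indepFun_iff_map_prod_eq_prod_map_map (hmeas i).aemeasurable hT.aemeasurable).mp hInd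
    have hsum : (fun ω => ∑ j ∈ Finset.cons i s hi, X j ω)
        = (fun p : ℝ × ℝ => p.1 + p.2) ∘ (fun ω => (X i ω, ∑ j ∈ s, X j ω)) := by
      funext ω; simp [Finset.sum_cons, Finset.sum_insert hi]
    rw [hsum, ← Measure.map_map measurable_add ((hmeas i).prodMk hT), hpair, ih,
      hlaw i, Finset.sum_cons, Finset.sum_cons]
    exact sg_conv (ha i) (Finset.sum_pos (fun j _ => ha j) hs) hb


end LogitPearsonAux

/-- **CDF of the logit sum of independent Pearson type III RVs with common `b > 0`.**
With `sa = Σ a_i`, `sm = Σ m_i` and `SZ = 1/(1 + e^{-(X₁ + ⋯ + X_L)})`, for every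
`1/(1 + e^{-sm}) < z < 1`,
`P(SZ ≤ z) = (1/Γ(sa)) γ(sa, b(ln(z/(1-z)) - sm))`. -/
theorem logitsum_pearsonIII_cdf_pos {Ω : Type*} [MeasureSpace Ω]
    [IsProbabilityMeasure (ℙ : Measure Ω)] (L : ℕ) (hL : 1 ≤ L)
    (a m : Fin L → ℝ) (b : ℝ) (ha : ∀ i, 0 < a i) (hb : 0 < b)
    (X : Fin L → Ω → ℝ) (hmeas : ∀ i, Measurable (X i))
    (hindep : iIndepFun X ℙ)
    (hlaw : ∀ i, Measure.map (X i) ℙ =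
      volume.withDensity fun x => ENNReal.ofReal (pearsonPDF (a i) b (m i) x))
    (z : ℝ) (hz0 : 1 / (1 + Real.exp (-∑ i, m i)) < z) (hz1 : z < 1) :
    ℙ {ω | 1 / (1 + Real.exp (-∑ i, X i ω)) ≤ z} =
      ENNReal.ofReal ((1 / Real.Gamma (∑ i, a i)) *
        ∫ t in (0 : ℝ)..(b * (Real.log (z / (1 - z)) - ∑ i, m i)),
          t ^ ((∑ i, a i) - 1) * Real.exp (-t)) := by
  have hz0' : 0 < z := by
    have hE : 0 < 1 + Real.exp (-∑ i, m i) := by positivity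
    have : 0 < 1 / (1 + Real.exp (-∑ i, m i)) := by positivity
    linarith
  have h1z : 0 < 1 - z := by linarith
  set c : ℝ := Real.log (z / (1 - z)) with hc_def
  have hlog : Real.log ((1 - z) / z) = -c := by
    rw [hc_def, ← Real.log_inv, inv_div]
  have hsm : (∑ i, m i) < c := by
    have hE : 0 < Real.exp (-∑ i, m i) := Real.exp_pos _
    have h1E : 0 < 1 + Real.exp (-∑ i, m i) := by linarith
    rw [div_lt_iff₀ h1E] at hz0
    have h2 : (1 - z) / z < Real.exp (-∑ i, m i) := by
      rw [div_lt_iff₀ hz0']; nlinarith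
    have h3 := (Real.log_lt_iff_lt_exp (div_pos h1z hz0')).mpr h2
    rw [hlog] at h3
    linarith
  have key : ∀ S : ℝ, (1 / (1 + Real.exp (-S)) ≤ z ↔ S ≤ c) := by
    intro S
    have hE : 0 < Real.exp (-S) := Real.exp_pos _
    have h1E : 0 < 1 + Real.exp (-S) := by linarith
    rw [div_le_iff₀ h1E]
    have h2 : 1 ≤ z * (1 + Real.exp (-S)) ↔ (1 - z) / z ≤ Real.exp (-S) := by
      rw [div_le_iff₀ hz0']
      constructor <;> intro h <;> nlinarith
    rw [h2, ← Real.log_le_iff_le_exp (div_pos h1z hz0'), hlog, neg_le_neg_iff]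
  have hS : Measurable (fun ω => ∑ i, X i ω) :=
    Finset.measurable_sum Finset.univ (fun j _ => hmeas j)
  have hset : {ω | 1 / (1 + Real.exp (-∑ i, X i ω)) ≤ z}
      = (fun ω => ∑ i, X i ω) ⁻¹' (Iic c) := by
    ext ω; simpa using key (∑ i, X i ω)
  have hlaw' : ∀ i, Measure.map (X i) ℙ = volume.withDensity (sgPDF (a i) b (m i)) := by
    intro i
    rw [hlaw i]
    exact withDensity_congr_ae (pearson_ae_sg (ha i) hb)
  have huniv : (Finset.univ : Finset (Fin L)).Nonempty := by
    have : 0 < L := hL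
    exact ⟨⟨0, this⟩, Finset.mem_univ _⟩
  have hmap := map_sum_sg a m b ha hb X hmeas hindep hlaw' Finset.univ huniv
  rw [hset, ← Measure.map_apply hS measurableSet_Iic, hmap,
    withDensity_apply _ measurableSet_Iic,
    sg_cdf (Finset.sum_pos (fun j _ => ha j) huniv) hb hsm]
end

section
/- Let L ≥ 1 and let X_1, …, X_L be independent random variables such that X_i follows the Pearson type III distribution with parameters (a_i, b, m_i), where a_i > 0 for all i and b > 0 is common to all the X_i. Set sa = Σ_{i=1}^{L} a_i and sm = Σ_{i=1}^{L} m_i, and assume sm > 0. Let SZ = 1/(1 + e^{−(X_1 + ⋯ + X_L)}). Then for every integer n ≥ 1, the series Σ_{l=0}^{∞} C(n + l − 1, l) (−1)^{l} e^{−sm·l} (1 + l/b)^{−sa} converges absolutely and E[SZ^n] = Σ_{l=0}^{∞} C(n + l − 1, l) (−1)^{l} e^{−sm·l} (1 + l/b)^{−sa}. -/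
open MeasureTheory ProbabilityTheory Set

lemma pearson_nonneg {a b m : ℝ} (ha : 0 < a) (hb : 0 < b) (x : ℝ) :
    0 ≤ pearsonPDF a b m x := by
  unfold pearsonPDF
  split
  · rename_i h
    rcases h with ⟨_, hx⟩ | ⟨hb', _⟩
    · have h1 : 0 ≤ b * (x - m) := mul_nonneg hb.le (by linarith)
      have h2 := Real.Gamma_pos_of_pos ha
      positivity
    · linarith
  · exact le_refl 0

lemma pearson_meas (a b m : ℝ) : Measurable (pearsonPDF a b m) := by
  unfold pearsonPDF
  refine Measurable.ite ?_ (by fun_prop) measurable_const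
  have : {x : ℝ | (0 < b ∧ m < x) ∨ (b < 0 ∧ x < m)}
      = ({x : ℝ | 0 < b} ∩ Ioi m) ∪ ({x : ℝ | b < 0} ∩ Iio m) := by
    ext x; simp [Set.mem_setOf_eq, Set.mem_Ioi, Set.mem_Iio]
  rw [this]
  exact ((MeasurableSet.const _).inter measurableSet_Ioi).union
    ((MeasurableSet.const _).inter measurableSet_Iio)

lemma pear_key {a b : ℝ} (ha : 0 < a) (hb : 0 < b) {t : ℝ} (ht : t ≤ 0) (m : ℝ) :
    Integrable (fun x => Real.exp (t * x) * pearsonPDF a b m x) volume ∧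
    ∫ x, Real.exp (t * x) * pearsonPDF a b m x = Real.exp (t * m) * (b / (b - t)) ^ a := by
  have hbt : 0 < b - t := by linarith
  have hΓ : 0 < Real.Gamma a := Real.Gamma_pos_of_pos ha
  set g : ℝ → ℝ := fun y => y ^ (a - 1) * Real.exp (-((b - t) * y)) with hg
  have hfun : (fun x => Real.exp (t * x) * pearsonPDF a b m x)
      = fun x => (Real.exp (t * m) * (b ^ a / Real.Gamma a)) •
          (Set.indicator (Ioi (0:ℝ)) g) (x - m) := by
    funext x
    by_cases hx : m < x
    · have hxm : (0:ℝ) < x - m := by linarith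
      have hcond : (0 < b ∧ m < x) ∨ (b < 0 ∧ x < m) := Or.inl ⟨hb, hx⟩
      rw [pearsonPDF, if_pos hcond, Set.indicator_of_mem (mem_Ioi.mpr hxm), abs_of_pos hb,
        Real.mul_rpow hb.le hxm.le]
      have hba : b ^ a = b ^ (a - 1) * b := by
        rw [← Real.rpow_add_one hb.ne' (a - 1)]; ring_nf
      rw [smul_eq_mul, hba, hg]
      have hexp : Real.exp (t * x) * Real.exp (-(b * (x - m)))
          = Real.exp (t * m) * Real.exp (-((b - t) * (x - m))) := by
        rw [← Real.exp_add, ← Real.exp_add]; congr 1; ring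
      linear_combination (b / Real.Gamma a * (b ^ (a-1) * (x - m) ^ (a-1))) * hexp
    · have h1 : pearsonPDF a b m x = 0 := by
        unfold pearsonPDF; rw [if_neg]; push_neg
        exact ⟨fun _ => not_lt.mp hx, fun h => absurd h (not_lt.mpr hb.le)⟩
      have h2 : x - m ∉ Ioi (0:ℝ) := by
        simp only [mem_Ioi, not_lt]; linarith [not_lt.mp hx]
      simp [h1, Set.indicator_of_notMem h2]
  have hig : IntegrableOn g (Ioi 0) volume := by
    have := integrableOn_rpow_mul_exp_neg_mul_rpow (s := a - 1) (p := 1)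
      (by linarith) zero_lt_one hbt
    refine this.congr_fun (fun x hx => ?_) measurableSet_Ioi
    simp only [hg, Real.rpow_one]; ring_nf
  have hind : Integrable (Set.indicator (Ioi (0:ℝ)) g) volume :=
    (integrable_indicator_iff measurableSet_Ioi).2 hig
  have hcomp : Integrable (fun x => (Set.indicator (Ioi (0:ℝ)) g) (x - m)) volume :=
    hind.comp_sub_right m
  constructor
  · rw [hfun]; simp only [smul_eq_mul]; exact hcomp.const_mul _
  · rw [hfun]
    rw [integral_smul]
    rw [show (∫ x : ℝ, (Set.indicator (Ioi (0:ℝ)) g) (x - m)) = ∫ x, Set.indicator (Ioi (0:ℝ)) g x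
      from integral_sub_right_eq_self _ m]
    rw [integral_indicator measurableSet_Ioi, hg]
    rw [Real.integral_rpow_mul_exp_neg_mul_Ioi ha hbt]
    rw [smul_eq_mul, Real.div_rpow hb.le hbt.le, Real.div_rpow zero_le_one hbt.le, Real.one_rpow]
    field_simp

lemma pear_mgf {Ω : Type*} [MeasureSpace Ω] {a b m : ℝ} (ha : 0 < a) (hb : 0 < b)
    {t : ℝ} (ht : t ≤ 0) {X : Ω → ℝ} (hX : Measurable X)
    (hlaw : Measure.map X ℙ = volume.withDensity fun x => ENNReal.ofReal (pearsonPDF a b m x)) :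
    Integrable (fun ω => Real.exp (t * X ω)) ℙ ∧
    ∫ ω, Real.exp (t * X ω) ∂ℙ = Real.exp (t * m) * (b / (b - t)) ^ a := by
  obtain ⟨Hint, Hval⟩ := pear_key ha hb ht m
  have hsm : AEStronglyMeasurable (fun x => Real.exp (t * x)) (Measure.map X ℙ) :=
    (Real.measurable_exp.comp (measurable_id.const_mul t)).aestronglyMeasurable
  have hden : (fun x => ENNReal.ofReal (pearsonPDF a b m x))
      = fun x => ((Real.toNNReal (pearsonPDF a b m x) : NNReal) : ENNReal) := rfl
  have hmeasnn : Measurable fun x => Real.toNNReal (pearsonPDF a b m x) :=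
    (pearson_meas a b m).real_toNNReal
  have hint_map : Integrable (fun x => Real.exp (t * x)) (Measure.map X ℙ) := by
    rw [hlaw, hden, integrable_withDensity_iff_integrable_smul hmeasnn]
    refine Hint.congr ?_
    refine ae_of_all _ fun x => ?_
    simp only [NNReal.smul_def, smul_eq_mul, Real.coe_toNNReal _ (pearson_nonneg ha hb x)]
    ring
  constructor
  · exact (integrable_map_measure hsm hX.aemeasurable).mp hint_map
  · rw [← integral_map hX.aemeasurable hsm, hlaw, hden,
      integral_withDensity_eq_integral_smul hmeasnn, ← Hval]
    congr 1; funext x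
    simp only [NNReal.smul_def, smul_eq_mul, Real.coe_toNNReal _ (pearson_nonneg ha hb x)]
    ring

lemma pear_gt_ae {Ω : Type*} [MeasureSpace Ω] {a b m : ℝ} (hb : 0 < b)
    {X : Ω → ℝ} (hX : Measurable X)
    (hlaw : Measure.map X ℙ = volume.withDensity fun x => ENNReal.ofReal (pearsonPDF a b m x)) :
    ∀ᵐ ω ∂(ℙ : Measure Ω), m < X ω := by
  have h0 : (Measure.map X ℙ) (Iic m) = 0 := by
    rw [hlaw, withDensity_apply _ measurableSet_Iic]
    rw [setLIntegral_congr_fun measurableSet_Iic (fun x hx => ?_)]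
    · exact lintegral_zero
    · show ENNReal.ofReal (pearsonPDF a b m x) = 0
      have : pearsonPDF a b m x = 0 := by
        unfold pearsonPDF; rw [if_neg]; push_neg
        exact ⟨fun _ => hx, fun h => absurd h (not_lt.mpr hb.le)⟩
      simp [this]
  rw [Measure.map_apply hX measurableSet_Iic] at h0
  rw [ae_iff]
  convert h0 using 2
  ext ω; simp [not_lt]

lemma hpt_series {n k : ℕ} (hkn : k + 1 = n) {s : ℝ} (hs : 0 < s) :
    HasSum (fun l : ℕ => (((n + l - 1).choose l : ℝ) * (-1) ^ l) * Real.exp (-(l : ℝ) * s))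
      ((1 / (1 + Real.exp (-s))) ^ n) := by
  have hr : ‖(-Real.exp (-s))‖ < 1 := by
    rw [norm_neg, Real.norm_eq_abs, abs_of_pos (Real.exp_pos _)]
    exact Real.exp_lt_one_iff.mpr (by linarith)
  have H := hasSum_choose_mul_geometric_of_norm_lt_one (𝕜 := ℝ) k hr
  convert H using 1
  · rfl
  · funext l
    have hcl : (n + l - 1).choose l = (l + k).choose k := by
      have h1 : n + l - 1 = l + k := by omega
      rw [h1, Nat.add_comm l k, Nat.choose_symm_add]
    rw [hcl, mul_assoc]
    congr 1
    rw [show -Real.exp (-s) = -1 * Real.exp (-s) by ring, mul_pow, ← Real.exp_nat_mul]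
    congr 1
    ring_nf
  · rw [sub_neg_eq_add, hkn, one_div_pow]

/-- **Moments of the logit sum of independent Pearson type III RVs with common `b > 0`
and `sm > 0`.** With `sa = Σ a_i`, `sm = Σ m_i > 0` and
`SZ = 1/(1 + e^{-(X₁ + ⋯ + X_L)})`, for every `n ≥ 1` the series
`Σ_{l=0}^∞ C(n+l-1, l) (-1)^l e^{-sm·l} (1 + l/b)^{-sa}` converges absolutely and
`E[SZ^n] = Σ_{l=0}^∞ C(n+l-1, l) (-1)^l e^{-sm·l} (1 + l/b)^{-sa}`. -/
theorem logitsum_pearsonIII_moments_pos {Ω : Type*} [MeasureSpace Ω]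
    [IsProbabilityMeasure (ℙ : Measure Ω)] (L : ℕ) (hL : 1 ≤ L)
    (a m : Fin L → ℝ) (b : ℝ) (ha : ∀ i, 0 < a i) (hb : 0 < b)
    (hsm : 0 < ∑ i, m i)
    (X : Fin L → Ω → ℝ) (hmeas : ∀ i, Measurable (X i))
    (hindep : iIndepFun X ℙ)
    (hlaw : ∀ i, Measure.map (X i) ℙ =
      volume.withDensity fun x => ENNReal.ofReal (pearsonPDF (a i) b (m i) x))
    (n : ℕ) (hn : 1 ≤ n) :
    Summable (fun l : ℕ =>
      ((n + l - 1).choose l : ℝ) * (-1) ^ l * Real.exp (-((∑ i, m i) * l)) *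
        (1 + l / b) ^ (-(∑ i, a i))) ∧
    ∫ ω, (1 / (1 + Real.exp (-∑ i, X i ω))) ^ n ∂ℙ =
      ∑' l : ℕ,
        ((n + l - 1).choose l : ℝ) * (-1) ^ l * Real.exp (-((∑ i, m i) * l)) *
          (1 + l / b) ^ (-(∑ i, a i)) := by
  have hne : Nonempty (Fin L) := ⟨⟨0, hL⟩⟩
  set sm := ∑ i, m i with hsm_def
  set sa := ∑ i, a i with hsa_def
  have hsa : 0 < sa := Finset.sum_pos (fun i _ => ha i) Finset.univ_nonempty
  set k := n - 1 with hk_def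
  have hkn : k + 1 = n := by omega
  -- each l-term of the answer
  set T : ℕ → ℝ := fun l => ((n + l - 1).choose l : ℝ) * (-1) ^ l * Real.exp (-(sm * l)) *
      (1 + l / b) ^ (-sa) with hT
  -- a.e. positivity of the sum
  have hSX_pos : ∀ᵐ ω ∂(ℙ : Measure Ω), 0 < ∑ i, X i ω := by
    have hall : ∀ᵐ ω ∂(ℙ : Measure Ω), ∀ i, m i < X i ω :=
      (ae_all_iff).2 fun i => pear_gt_ae hb (hmeas i) (hlaw i)
    filter_upwards [hall] with ω hω
    calc (0:ℝ) < ∑ i, m i := hsm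
      _ < ∑ i, X i ω := Finset.sum_lt_sum_of_nonempty Finset.univ_nonempty fun i _ => hω i
  -- mgf facts
  have hIi : ∀ (t : ℝ), t ≤ 0 → ∀ i, Integrable (fun ω => Real.exp (t * X i ω)) ℙ :=
    fun t ht i => (pear_mgf (ha i) hb ht (hmeas i) (hlaw i)).1
  have hISX : ∀ (t : ℝ), t ≤ 0 → Integrable (fun ω => Real.exp (t * ∑ i, X i ω)) ℙ := by
    intro t ht
    have := hindep.integrable_exp_mul_sum hmeas (s := Finset.univ) (fun i _ => hIi t ht i)
    simpa [Finset.sum_apply] using this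
  have hval : ∀ (t : ℝ), t ≤ 0 →
      ∫ ω, Real.exp (t * ∑ i, X i ω) ∂ℙ = Real.exp (t * sm) * (b / (b - t)) ^ sa := by
    intro t ht
    have h1 := hindep.mgf_sum hmeas Finset.univ (t := t)
    have h2 : mgf (∑ i, X i) ℙ t = ∫ ω, Real.exp (t * ∑ i, X i ω) ∂ℙ := by
      unfold mgf; congr 1; funext ω; simp [Finset.sum_apply]
    have h3 : ∀ i, mgf (X i) ℙ t = Real.exp (t * m i) * (b / (b - t)) ^ (a i) := fun i =>
      (pear_mgf (ha i) hb ht (hmeas i) (hlaw i)).2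
    have hc : (0:ℝ) < b / (b - t) := div_pos hb (by linarith)
    rw [← h2, h1]
    rw [Finset.prod_congr rfl fun i _ => h3 i, Finset.prod_mul_distrib, ← Real.exp_sum,
      ← Finset.mul_sum]
    congr 1
    simp_rw [Real.rpow_def_of_pos hc]
    rw [← Real.exp_sum, ← Finset.mul_sum]
  -- conversion of the mgf value at t = -l
  have hconv : ∀ l : ℕ, Real.exp (-(l:ℝ) * sm) * (b / (b - -(l:ℝ))) ^ sa
      = Real.exp (-(sm * l)) * (1 + l / b) ^ (-sa) := by
    intro l
    have h0 : (0:ℝ) ≤ 1 + (l:ℝ) / b := by positivity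
    have h1 : b / (b - -(l:ℝ)) = (1 + (l:ℝ) / b)⁻¹ := by
      rw [sub_neg_eq_add]; field_simp
    rw [h1, Real.inv_rpow h0, ← Real.rpow_neg h0]
    congr 2
    ring
  -- geometric bound
  set G : ℕ → ℝ := fun l => ((n + l - 1).choose l : ℝ) * Real.exp (-sm) ^ l with hG
  have hGsum : Summable G := by
    have hr : ‖Real.exp (-sm)‖ < 1 := by
      rw [Real.norm_eq_abs, abs_of_pos (Real.exp_pos _)]
      exact Real.exp_lt_one_iff.mpr (by linarith)
    have := summable_choose_mul_geometric_of_norm_lt_one (R := ℝ) k hr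
    refine this.congr fun l => ?_
    have hcl : (n + l - 1).choose l = (l + k).choose k := by
      have h1 : n + l - 1 = l + k := by omega
      rw [h1, Nat.add_comm l k, Nat.choose_symm_add]
    show ((l + k).choose k : ℝ) * Real.exp (-sm) ^ l
      = ((n + l - 1).choose l : ℝ) * Real.exp (-sm) ^ l
    rw [hcl]
  have hple : ∀ l : ℕ, (1 + (l:ℝ) / b) ^ (-sa) ≤ 1 := fun l =>
    Real.rpow_le_one_of_one_le_of_nonpos (le_add_of_nonneg_right (by positivity)) (by linarith)
  have hppos : ∀ l : ℕ, 0 < (1 + (l:ℝ) / b) ^ (-sa) := fun l =>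
    Real.rpow_pos_of_pos (by positivity) _
  have hexp_eq : ∀ l : ℕ, Real.exp (-(sm * l)) = Real.exp (-sm) ^ l := by
    intro l
    rw [← Real.exp_nat_mul]; congr 1; ring
  -- conjunct 1
  have hTsum : Summable T := by
    refine Summable.of_norm_bounded hGsum fun l => ?_
    rw [hT, hG]
    have h1 : ‖((n + l - 1).choose l : ℝ) * (-1) ^ l * Real.exp (-(sm * l)) *
        (1 + l / b) ^ (-sa)‖
        = ((n + l - 1).choose l : ℝ) * Real.exp (-(sm * l)) * (1 + l / b) ^ (-sa) := by
      rw [Real.norm_eq_abs, abs_mul, abs_mul, abs_mul, abs_pow, abs_neg, abs_one, one_pow,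
        mul_one, Nat.abs_cast, abs_of_pos (Real.exp_pos _), abs_of_pos (hppos l)]
    rw [h1, hexp_eq l]
    calc ((n + l - 1).choose l : ℝ) * Real.exp (-sm) ^ l * (1 + l / b) ^ (-sa)
        ≤ ((n + l - 1).choose l : ℝ) * Real.exp (-sm) ^ l * 1 := by
          refine mul_le_mul_of_nonneg_left (hple l) (by positivity)
      _ = ((n + l - 1).choose l : ℝ) * Real.exp (-sm) ^ l := mul_one _
  refine ⟨hTsum, ?_⟩
  -- the integrand series
  set F : ℕ → Ω → ℝ := fun l ω => (((n + l - 1).choose l : ℝ) * (-1) ^ l) *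
      Real.exp (-(l:ℝ) * ∑ i, X i ω) with hF
  have hFint : ∀ l : ℕ, Integrable (F l) ℙ := fun l =>
    (hISX (-(l:ℝ)) (neg_nonpos.mpr (Nat.cast_nonneg l))).const_mul _
  have hnormF : ∀ l : ℕ, ∫ ω, ‖F l ω‖ ∂ℙ
      = ((n + l - 1).choose l : ℝ) * (Real.exp (-(sm * l)) * (1 + l / b) ^ (-sa)) := by
    intro l
    have h1 : ∀ ω, ‖F l ω‖ = ((n + l - 1).choose l : ℝ) * Real.exp (-(l:ℝ) * ∑ i, X i ω) := by
      intro ω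
      rw [hF]
      rw [Real.norm_eq_abs, abs_mul, abs_mul, abs_pow, abs_neg, abs_one, one_pow, mul_one,
        Nat.abs_cast, abs_of_pos (Real.exp_pos _)]
    simp_rw [h1]
    rw [integral_const_mul, hval (-(l:ℝ)) (neg_nonpos.mpr (Nat.cast_nonneg l)), hconv l]
  have hsumnorm : Summable fun l => ∫ ω, ‖F l ω‖ ∂ℙ := by
    refine Summable.of_nonneg_of_le
      (fun l => integral_nonneg fun ω => norm_nonneg _) (fun l => ?_) hGsum
    rw [hnormF l, hexp_eq l, hG]
    calc ((n + l - 1).choose l : ℝ) * (Real.exp (-sm) ^ l * (1 + l / b) ^ (-sa))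
        ≤ ((n + l - 1).choose l : ℝ) * (Real.exp (-sm) ^ l * 1) := by
          refine mul_le_mul_of_nonneg_left
            (mul_le_mul_of_nonneg_left (hple l) (by positivity)) (by positivity)
      _ = ((n + l - 1).choose l : ℝ) * Real.exp (-sm) ^ l := by rw [mul_one]
  have hae : ∀ᵐ ω ∂(ℙ : Measure Ω),
      (1 / (1 + Real.exp (-∑ i, X i ω))) ^ n = ∑' l, F l ω := by
    filter_upwards [hSX_pos] with ω hω
    exact ((hpt_series hkn hω).tsum_eq).symm
  rw [integral_congr_ae hae, ← integral_tsum_of_summable_integral_norm hFint hsumnorm]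
  refine tsum_congr fun l => ?_
  show (∫ ω, (((n + l - 1).choose l : ℝ) * (-1) ^ l) * Real.exp (-(l:ℝ) * ∑ i, X i ω) ∂ℙ) = _
  rw [integral_const_mul, hval (-(l:ℝ)) (neg_nonpos.mpr (Nat.cast_nonneg l)), hconv l]
  ring
end

section
/- Let a > 0, b > 0 and let A, B, P_s, l, p be positive constants. Let G be a random variable with the Gamma(a, b) distribution, and define the harvested power Q = P_s(1 + e^{AB}) / (e^{AB}(1 + e^{−A(l p G − B)})) − P_s e^{−AB}. Then for every q with 0 < q < P_s, P(Q ≤ q) = (1/Γ(a)) γ(a, −(b/(A l p)) (ln(P_s(1 + e^{AB})/(e^{AB}(q + P_s e^{−AB})) − 1) − A B)), where γ(a, u) = ∫_0^u t^{a−1} e^{−t} dt is the lower incomplete gamma function (the argument of γ is positive for 0 < q < P_s). -/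
open MeasureTheory ProbabilityTheory Set

/-- The Gamma density with shape `a > 0` and rate `b > 0`:
`(b^a/Γ(a)) x^{a-1} e^{-bx}` on `(0, ∞)`, and `0` elsewhere. -/
noncomputable def gammaPDF (a b x : ℝ) : ℝ :=
  if 0 < x then b ^ a / Real.Gamma a * x ^ (a - 1) * Real.exp (-(b * x)) else 0

lemma harv_iff (A B Ps l p q g : ℝ) (hA : 0 < A) (hPs : 0 < Ps)
    (hl : 0 < l) (hp : 0 < p) (hq0 : 0 < q) (hq1 : q < Ps)
    (hR1 : 1 < Ps * (1 + Real.exp (A * B)) /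
        (Real.exp (A * B) * (q + Ps * Real.exp (-(A * B))))) :
    Ps * (1 + Real.exp (A * B)) /
            (Real.exp (A * B) * (1 + Real.exp (-(A * (l * p * g - B))))) -
          Ps * Real.exp (-(A * B)) ≤ q ↔
      g ≤ (A * B - Real.log (Ps * (1 + Real.exp (A * B)) /
          (Real.exp (A * B) * (q + Ps * Real.exp (-(A * B)))) - 1)) / (A * l * p) := by
  set E := Real.exp (-(A * (l * p * g - B))) with hEdef
  set R := Ps * (1 + Real.exp (A * B)) /
      (Real.exp (A * B) * (q + Ps * Real.exp (-(A * B)))) with hRdef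
  have hE : 0 < E := Real.exp_pos _
  have heAB : 0 < Real.exp (A * B) := Real.exp_pos _
  have hD : 0 < Real.exp (A * B) * (1 + E) := by positivity
  have hK : 0 < q + Ps * Real.exp (-(A * B)) := by positivity
  have hEK : 0 < Real.exp (A * B) * (q + Ps * Real.exp (-(A * B))) := by positivity
  have hAlp : 0 < A * l * p := by positivity
  rw [sub_le_iff_le_add, div_le_iff₀ hD,
    show (q + Ps * Real.exp (-(A * B))) * (Real.exp (A * B) * (1 + E))
      = (1 + E) * (Real.exp (A * B) * (q + Ps * Real.exp (-(A * B)))) from by ring,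
    ← div_le_iff₀ hEK, ← hRdef, ← sub_le_iff_le_add', hEdef,
    ← Real.log_le_iff_le_exp (by linarith : 0 < R - 1), le_div_iff₀ hAlp]
  constructor <;> intro h <;> nlinarith [h]

/-- **CDF of the harvested power in the nonlinear SISO energy-harvesting model.**
With channel gain `G ~ Gamma(a, b)` and harvested power
`Q = P_s(1+e^{AB})/(e^{AB}(1+e^{-A(lpG-B)})) - P_s e^{-AB}`, for every `0 < q < P_s`,
`P(Q ≤ q) = (1/Γ(a)) γ(a, -(b/(Alp))(ln(P_s(1+e^{AB})/(e^{AB}(q+P_s e^{-AB})) - 1) - AB))`. -/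
theorem harvestedPower_siso_cdf {Ω : Type*} [MeasureSpace Ω]
    [IsProbabilityMeasure (ℙ : Measure Ω)] (a b A B Ps l p : ℝ)
    (ha : 0 < a) (hb : 0 < b) (hA : 0 < A) (hB : 0 < B) (hPs : 0 < Ps)
    (hl : 0 < l) (hp : 0 < p)
    (G : Ω → ℝ) (hG : Measurable G)
    (hlaw : Measure.map G ℙ = volume.withDensity fun x => ENNReal.ofReal (gammaPDF a b x))
    (q : ℝ) (hq0 : 0 < q) (hq1 : q < Ps) :
    ℙ {ω | Ps * (1 + Real.exp (A * B)) /
            (Real.exp (A * B) * (1 + Real.exp (-(A * (l * p * G ω - B))))) -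
          Ps * Real.exp (-(A * B)) ≤ q} =
      ENNReal.ofReal ((1 / Real.Gamma a) *
        ∫ t in (0 : ℝ)..(-(b / (A * l * p)) *
            (Real.log (Ps * (1 + Real.exp (A * B)) /
              (Real.exp (A * B) * (q + Ps * Real.exp (-(A * B)))) - 1) - A * B)),
          t ^ (a - 1) * Real.exp (-t)) := by
  have heAB : 0 < Real.exp (A * B) := Real.exp_pos _
  have h1 : Real.exp (A * B) * Real.exp (-(A * B)) = 1 := by
    rw [← Real.exp_add, add_neg_cancel, Real.exp_zero]
  set R := Ps * (1 + Real.exp (A * B)) /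
      (Real.exp (A * B) * (q + Ps * Real.exp (-(A * B)))) with hRdef
  have hK : 0 < q + Ps * Real.exp (-(A * B)) := by positivity
  have hEK : 0 < Real.exp (A * B) * (q + Ps * Real.exp (-(A * B))) := by positivity
  have h3 : Ps * Real.exp (A * B) * Real.exp (-(A * B)) = Ps := by
    rw [mul_assoc, h1, mul_one]
  have hR1 : 1 < R := by
    rw [hRdef, lt_div_iff₀ hEK]
    nlinarith [h3, mul_lt_mul_of_pos_left hq1 heAB]
  have hRlt : R - 1 < Real.exp (A * B) := by
    have : R < 1 + Real.exp (A * B) := by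
      rw [hRdef, div_lt_iff₀ hEK]
      nlinarith [h3, mul_pos heAB hq0, mul_pos (mul_pos heAB heAB) hq0]
    linarith
  have hlogAB : Real.log (R - 1) < A * B := by
    rw [Real.log_lt_iff_lt_exp (by linarith)]; exact hRlt
  have hAlp : 0 < A * l * p := by positivity
  set c := (A * B - Real.log (R - 1)) / (A * l * p) with hcdef
  have hc : 0 < c := div_pos (by linarith) hAlp
  have hset : {ω | Ps * (1 + Real.exp (A * B)) /
            (Real.exp (A * B) * (1 + Real.exp (-(A * (l * p * G ω - B))))) -
          Ps * Real.exp (-(A * B)) ≤ q} = G ⁻¹' (Iic c) := by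
    ext ω
    simpa using harv_iff A B Ps l p q (G ω) hA hPs hl hp hq0 hq1 hR1
  rw [hset, ← Measure.map_apply hG measurableSet_Iic, hlaw,
    withDensity_apply _ measurableSet_Iic]
  -- split off (-∞, 0]
  have hsplit : ∫⁻ x in Iic c, ENNReal.ofReal (gammaPDF a b x)
      = ∫⁻ x in Ioc 0 c, ENNReal.ofReal (gammaPDF a b x) := by
    rw [← Iic_union_Ioc_eq_Iic hc.le, lintegral_union measurableSet_Ioc
      (Iic_disjoint_Ioc le_rfl)]
    have : ∫⁻ x in Iic (0:ℝ), ENNReal.ofReal (gammaPDF a b x)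
        = ∫⁻ _ in Iic (0:ℝ), (0 : ENNReal) := by
      refine setLIntegral_congr_fun measurableSet_Iic
        (fun x (hx : x ≤ 0) => ?_)
      simp [_root_.gammaPDF, not_lt.mpr hx]
    rw [this]; simp
  rw [hsplit]
  set f : ℝ → ℝ := fun x => b ^ a / Real.Gamma a * (x ^ (a - 1) * Real.exp (-(b * x)))
    with hfdef
  have hint : IntervalIntegrable f volume 0 c := by
    exact ((intervalIntegral.intervalIntegrable_rpow' (by linarith : (-1:ℝ) < a - 1)).mul_continuousOn
      (Continuous.continuousOn (by continuity))).const_mul _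
  have hcongr : ∫⁻ x in Ioc 0 c, ENNReal.ofReal (gammaPDF a b x)
      = ∫⁻ x in Ioc 0 c, ENNReal.ofReal (f x) := by
    refine setLIntegral_congr_fun measurableSet_Ioc (fun x hx => ?_)
    simp [_root_.gammaPDF, hx.1, hfdef, mul_assoc]
  rw [hcongr, ← MeasureTheory.ofReal_integral_eq_lintegral_ofReal
    ((intervalIntegrable_iff_integrableOn_Ioc_of_le hc.le).mp hint)
    ((ae_restrict_iff' measurableSet_Ioc).mpr (ae_of_all _ fun x hx => by
      have hΓ := Real.Gamma_pos_of_pos ha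
      have hx0 : 0 < x := hx.1
      dsimp [f]; positivity))]
  rw [← intervalIntegral.integral_of_le hc.le]
  have hsub : ∫ x in (0:ℝ)..c, f x
      = (1 / Real.Gamma a) * ∫ t in (0:ℝ)..(b * c), t ^ (a - 1) * Real.exp (-t) := by
    have : ∀ x ∈ uIcc (0:ℝ) c, f x
        = (b / Real.Gamma a) * ((fun t => t ^ (a - 1) * Real.exp (-t)) (b * x)) := by
      intro x hx
      have hx0 : 0 ≤ x := by
        rcases hx with ⟨h1', h2'⟩
        simpa [min_eq_left hc.le] using h1'
      dsimp [f]
      rw [Real.mul_rpow hb.le hx0]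
      have hba : b ^ a = b * b ^ (a - 1) := by
        nth_rewrite 1 [show a = 1 + (a - 1) from by ring]
        rw [Real.rpow_add hb, Real.rpow_one]
      rw [hba]
      ring
    have hcomp : ∫ x in (0:ℝ)..c, (fun t => t ^ (a - 1) * Real.exp (-t)) (b * x)
        = b⁻¹ • ∫ t in (b * 0:ℝ)..(b * c), t ^ (a - 1) * Real.exp (-t) :=
      intervalIntegral.integral_comp_mul_left (fun t => t ^ (a - 1) * Real.exp (-t)) hb.ne'
    rw [intervalIntegral.integral_congr this, intervalIntegral.integral_const_mul, hcomp,
      mul_zero, smul_eq_mul]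
    field_simp
  have hbc : b * c = -(b / (A * l * p)) * (Real.log (R - 1) - A * B) := by
    rw [hcdef]; field_simp; ring
  rw [hsub, hbc]
end

section
/- Let a > 0, b > 0 and let A, B, P_s, l, p be positive constants; write b̂ = b/(A l p) and c = P_s e^{−AB}. Let G be a random variable with the Gamma(a, b) distribution and let Q = P_s(1 + e^{AB})/(e^{AB}(1 + e^{−A(l p G − B)})) − P_s e^{−AB}. Then the law of Q is absolutely continuous with density f_Q(q) = (c(1 + e^{AB}) b̂^{a} / (Γ(a) e^{A B b̂})) · (c e^{AB} − q)^{b̂ − 1} (c + q)^{−b̂ − 1} · (A B − ln(c(1 + e^{AB})/(c + q) − 1))^{a−1} for q ∈ (0, P_s), and density 0 elsewhere (note c e^{AB} = P_s). -/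
open MeasureTheory ProbabilityTheory Set

private lemma lintegral_image_deriv {s : Set ℝ} {f f' : ℝ → ℝ}
    (hs : MeasurableSet s) (hf' : ∀ x ∈ s, HasDerivWithinAt f (f' x) s x)
    (hf : Set.InjOn f s) (g : ℝ → ENNReal) :
    ∫⁻ x in f '' s, g x = ∫⁻ x in s, ENNReal.ofReal |f' x| * g (f x) := by
  simpa only [ContinuousLinearMap.det_toSpanSingleton] using
    lintegral_image_eq_lintegral_abs_det_fderiv_mul volume hs
      (fun x hx => (hf' x hx).hasFDerivWithinAt) hf g

set_option maxHeartbeats 1000000 in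
/-- **PDF of the harvested power in the nonlinear SISO energy-harvesting model.**
With `b̂ = b/(Alp)`, `c = P_s e^{-AB}`, channel gain `G ~ Gamma(a, b)` and
`Q = P_s(1+e^{AB})/(e^{AB}(1+e^{-A(lpG-B)})) - P_s e^{-AB}`, the law of `Q` has density
`(c(1+e^{AB}) b̂^a/(Γ(a) e^{ABb̂})) (ce^{AB}-q)^{b̂-1} (c+q)^{-b̂-1}
   (AB - ln(c(1+e^{AB})/(c+q) - 1))^{a-1}` on `(0, P_s)`, and `0` elsewhere. -/
theorem harvestedPower_siso_pdf {Ω : Type*} [MeasureSpace Ω]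
    [IsProbabilityMeasure (ℙ : Measure Ω)] (a b A B Ps l p bhat c : ℝ)
    (ha : 0 < a) (hb : 0 < b) (hA : 0 < A) (hB : 0 < B) (hPs : 0 < Ps)
    (hl : 0 < l) (hp : 0 < p)
    (hbhat : bhat = b / (A * l * p)) (hc : c = Ps * Real.exp (-(A * B)))
    (G : Ω → ℝ) (hG : Measurable G)
    (hlaw : Measure.map G ℙ = volume.withDensity fun x => ENNReal.ofReal (gammaPDF a b x)) :
    Measure.map (fun ω =>
        Ps * (1 + Real.exp (A * B)) /
            (Real.exp (A * B) * (1 + Real.exp (-(A * (l * p * G ω - B))))) -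
          Ps * Real.exp (-(A * B))) ℙ =
      volume.withDensity fun q =>
        ENNReal.ofReal
          (if 0 < q ∧ q < Ps then
            c * (1 + Real.exp (A * B)) * bhat ^ a /
                (Real.Gamma a * Real.exp (A * B * bhat)) *
              (c * Real.exp (A * B) - q) ^ (bhat - 1) * (c + q) ^ (-bhat - 1) *
              (A * B - Real.log (c * (1 + Real.exp (A * B)) / (c + q) - 1)) ^ (a - 1)
          else 0) := by
  have hE : (0:ℝ) < Real.exp (A * B) := Real.exp_pos _
  set E := Real.exp (A * B) with hEdef
  set k := A * l * p with hkdef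
  have hk : 0 < k := by rw [hkdef]; positivity
  have hcpos : 0 < c := by rw [hc]; positivity
  have hcE : c * E = Ps := by
    rw [hc, hEdef, mul_assoc, ← Real.exp_add, neg_add_cancel, Real.exp_zero, mul_one]
  have hbhk : bhat = b / k := by rw [hbhat, hkdef]
  have hbh : 0 < bhat := by rw [hbhk]; positivity
  set φ : ℝ → ℝ := fun g =>
    Ps * (1 + E) / (E * (1 + Real.exp (-(A * (l * p * g - B))))) - Ps * Real.exp (-(A * B))
    with hφdef
  set ψ : ℝ → ℝ := fun q => (A * B - Real.log (c * (1 + E) / (c + q) - 1)) / k with hψdef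
  clear_value E k
  clear_value φ ψ
  have hexpg : ∀ g : ℝ, Real.exp (-(A * (l * p * g - B))) = E * Real.exp (-(k * g)) := by
    intro g; rw [hEdef, ← Real.exp_add]; congr 1; rw [hkdef]; ring
  -- algebraic facts about the inverse on (0, Ps)
  have hu : ∀ q : ℝ, 0 < q → c * (1 + E) / (c + q) - 1 = (Ps - q) / (c + q) := by
    intro q hq
    have hcq : (0:ℝ) < c + q := by linarith
    rw [div_sub_one hcq.ne']
    congr 1
    linear_combination hcE
  have hupos : ∀ q : ℝ, 0 < q → q < Ps → 0 < (Ps - q) / (c + q) := by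
    intro q hq1 hq2
    have hcq : (0:ℝ) < c + q := by linarith
    have : 0 < Ps - q := by linarith
    positivity
  have hlogu : ∀ q : ℝ, 0 < q → q < Ps → Real.log ((Ps - q) / (c + q)) < A * B := by
    intro q hq1 hq2
    have hcq : (0:ℝ) < c + q := by linarith
    rw [Real.log_lt_iff_lt_exp (hupos q hq1 hq2), div_lt_iff₀ hcq, ← hEdef]
    nlinarith [hcE, hE, hcpos]
  have hψval : ∀ q : ℝ, 0 < q → ψ q = (A * B - Real.log ((Ps - q) / (c + q))) / k := by
    intro q hq; rw [hψdef]; simp only; rw [hu q hq]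
  have hψpos : ∀ q : ℝ, 0 < q → q < Ps → 0 < ψ q := by
    intro q hq1 hq2
    rw [hψval q hq1]
    have := hlogu q hq1 hq2
    apply div_pos (by linarith) hk
  have hkψ : ∀ q : ℝ, 0 < q → k * ψ q = A * B - Real.log ((Ps - q) / (c + q)) := by
    intro q hq; rw [hψval q hq]; field_simp
  have hφψ : ∀ q : ℝ, 0 < q → q < Ps → φ (ψ q) = q := by
    intro q hq1 hq2
    have hcq : (0:ℝ) < c + q := by linarith
    have hup := hupos q hq1 hq2
    have h1 : Real.exp (-(A * (l * p * ψ q - B))) = (Ps - q) / (c + q) := by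
      rw [hexpg]
      calc E * Real.exp (-(k * ψ q)) = Real.exp (A * B + -(k * ψ q)) := by
            rw [hEdef, Real.exp_add]
        _ = Real.exp (Real.log ((Ps - q) / (c + q))) := by rw [hkψ q hq1]; ring_nf
        _ = (Ps - q) / (c + q) := Real.exp_log hup
    rw [hφdef]; simp only; rw [h1, ← hc]
    have hden : (0:ℝ) < E * (1 + (Ps - q) / (c + q)) := by positivity
    rw [sub_eq_iff_eq_add, div_eq_iff hden.ne']
    field_simp
    linear_combination (-(c + q)) * hcE
  -- forward facts for g > 0
  have hgfacts : ∀ g : ℝ, 0 < g → 0 < φ g ∧ φ g < Ps ∧ ψ (φ g) = g := by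
    intro g hg
    set s := Real.exp (-(k * g)) with hsdef
    have hs1 : 0 < s := Real.exp_pos _
    clear_value s
    have hsg : Real.exp (-(A * (l * p * g - B))) = E * s := by rw [hexpg g, ← hsdef]
    have hs2 : s < 1 := by
      rw [hsdef]
      apply Real.exp_lt_one_iff.mpr
      nlinarith
    have hden : (0:ℝ) < 1 + E * s := by positivity
    have hsum : c + φ g = c * (1 + E) / (1 + E * s) := by
      rw [hφdef]; simp only; rw [hsg, ← hc, ← hcE]
      field_simp
      ring
    have h0 : 0 < φ g := by
      have : c < c * (1 + E) / (1 + E * s) := by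
        rw [lt_div_iff₀ hden]
        nlinarith
      nlinarith [hsum, this]
    have hPsg : φ g < Ps := by
      have : c * (1 + E) / (1 + E * s) < c + Ps := by
        rw [div_lt_iff₀ hden]
        nlinarith [hcE, mul_pos (mul_pos hcpos hE) hs1, mul_pos (mul_pos hPs hE) hs1]
      nlinarith [hsum, this]
    refine ⟨h0, hPsg, ?_⟩
    have hcφ : (0:ℝ) < c + φ g := by linarith
    have h2 : c * (1 + E) / (c + φ g) - 1 = E * s := by
      have hne : c * (1 + E) / (1 + E * s) ≠ 0 := by positivity
      rw [hsum, sub_eq_iff_eq_add, div_eq_iff hne]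
      field_simp
      ring
    have h3 : Real.log (E * s) = A * B - k * g := by
      rw [Real.log_mul hE.ne' hs1.ne', hEdef, Real.log_exp, hsdef, Real.log_exp]
      ring
    rw [hψdef]; simp only; rw [h2, h3]
    field_simp
    ring
  -- map composition
  have hφcont : Continuous φ := by
    rw [hφdef]
    apply Continuous.sub _ continuous_const
    apply continuous_const.div
    · fun_prop
    · intro g; positivity
  have hφm : Measurable φ := hφcont.measurable
  have hmap : (fun ω => Ps * (1 + E) / (E * (1 + Real.exp (-(A * (l * p * G ω - B))))) -
      Ps * Real.exp (-(A * B))) = fun ω => φ (G ω) := by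
    funext ω; rw [hφdef]
  rw [hmap, show (fun ω => φ (G ω)) = φ ∘ G from rfl, ← Measure.map_map hφm hG, hlaw]
  ext S hS
  rw [Measure.map_apply hφm hS, withDensity_apply _ (hφm hS), withDensity_apply _ hS]
  have hSIoo : MeasurableSet (S ∩ Ioo 0 Ps) := hS.inter measurableSet_Ioo
  have hrel1 : ∫⁻ x in φ ⁻¹' S, ENNReal.ofReal (_root_.gammaPDF a b x)
      = ∫⁻ x in φ ⁻¹' S ∩ Ioi 0, ENNReal.ofReal (_root_.gammaPDF a b x) := by
    rw [← lintegral_indicator (hφm hS), ← lintegral_indicator ((hφm hS).inter measurableSet_Ioi)]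
    congr 1; funext x
    by_cases h0 : 0 < x
    · by_cases hxS : x ∈ φ ⁻¹' S <;>
        simp [Set.indicator_apply, h0, hxS, Set.mem_Ioi]
    · have hg0 : _root_.gammaPDF a b x = 0 := by rw [_root_.gammaPDF, if_neg h0]
      by_cases hxS : x ∈ φ ⁻¹' S <;>
        simp [Set.indicator_apply, h0, hxS, hg0, Set.mem_Ioi]
  have hrel2 : ∀ (F : ℝ → ℝ), (∀ q, ¬(0 < q ∧ q < Ps) → F q = 0) →
      ∫⁻ q in S, ENNReal.ofReal (F q) = ∫⁻ q in S ∩ Ioo 0 Ps, ENNReal.ofReal (F q) := by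
    intro F hF0
    rw [← lintegral_indicator hS, ← lintegral_indicator hSIoo]
    congr 1; funext q
    by_cases h0 : 0 < q ∧ q < Ps
    · by_cases hqS : q ∈ S
      · rw [Set.indicator_of_mem hqS, Set.indicator_of_mem (Set.mem_inter hqS (Set.mem_Ioo.mpr ⟨h0.1, h0.2⟩))]
      · rw [Set.indicator_of_notMem hqS, Set.indicator_of_notMem (fun h => hqS h.1)]
    · by_cases hqS : q ∈ S
      · rw [Set.indicator_of_mem hqS, Set.indicator_of_notMem
          (fun h => h0 ⟨h.2.1, h.2.2⟩), hF0 q h0, ENNReal.ofReal_zero]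
      · rw [Set.indicator_of_notMem hqS, Set.indicator_of_notMem (fun h => hqS h.1)]
  have himg : φ ⁻¹' S ∩ Ioi 0 = ψ '' (S ∩ Ioo 0 Ps) := by
    ext g
    constructor
    · rintro ⟨hgS, hg0⟩
      obtain ⟨h1, h2, h3⟩ := hgfacts g hg0
      exact ⟨φ g, ⟨hgS, h1, h2⟩, h3⟩
    · rintro ⟨q, ⟨hqS, hq1, hq2⟩, rfl⟩
      refine ⟨?_, hψpos q hq1 hq2⟩
      show φ (ψ q) ∈ S
      rw [hφψ q hq1 hq2]; exact hqS
  set ψd : ℝ → ℝ := fun q => c * (1 + E) / (k * ((c + q) * (Ps - q))) with hψddef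
  clear_value ψd
  have hψdval : ∀ q : ℝ, ψd q = c * (1 + E) / (k * ((c + q) * (Ps - q))) := by
    intro q; rw [hψddef]
  have hder : ∀ q ∈ S ∩ Ioo 0 Ps, HasDerivWithinAt ψ (ψd q) (S ∩ Ioo 0 Ps) q := by
    rintro q ⟨-, hq1, hq2⟩
    have hcq : (0:ℝ) < c + q := by linarith
    have hPq : (0:ℝ) < Ps - q := by linarith
    have hup : 0 < c * (1 + E) / (c + q) - 1 := by
      rw [hu q hq1]; exact hupos q hq1 hq2
    have h1 : HasDerivAt (fun x : ℝ => c + x) 1 q := by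
      simpa using (hasDerivAt_id q).const_add c
    have h2 : HasDerivAt (fun x : ℝ => c * (1 + E) / (c + x))
        ((0 * (c + q) - c * (1 + E) * 1) / (c + q) ^ 2) q :=
      (hasDerivAt_const q (c * (1 + E))).div h1 hcq.ne'
    have h3 := h2.sub_const 1
    have h4 := h3.log hup.ne'
    have h5 := ((hasDerivAt_const q (A * B)).sub h4).div_const k
    rw [hψdef]
    refine HasDerivAt.hasDerivWithinAt ?_
    refine h5.congr_deriv ?_
    symm
    rw [hψdval q]
    rw [hu q hq1]
    field_simp
    ring
  have hinj : Set.InjOn ψ (S ∩ Ioo 0 Ps) := by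
    rintro q1 ⟨-, h11, h12⟩ q2 ⟨-, h21, h22⟩ h
    rw [← hφψ q1 h11 h12, ← hφψ q2 h21 h22, h]
  rw [hrel1, himg, lintegral_image_deriv hSIoo hder hinj]
  have key := hrel2 (fun q =>
      if 0 < q ∧ q < Ps then
        c * (1 + E) * bhat ^ a / (Real.Gamma a * Real.exp (A * B * bhat)) *
          (c * E - q) ^ (bhat - 1) * (c + q) ^ (-bhat - 1) *
          (A * B - Real.log (c * (1 + E) / (c + q) - 1)) ^ (a - 1)
      else 0) (fun q hq => if_neg hq)
  beta_reduce at key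
  rw [key]
  refine setLIntegral_congr_fun hSIoo ?_
  rintro q ⟨hqS, hq1, hq2⟩
  have hcq : (0:ℝ) < c + q := by linarith
  have hPq : (0:ℝ) < Ps - q := by linarith
  have hψq := hψpos q hq1 hq2
  have hψdq : 0 < ψd q := by
    rw [hψdval q]
    have h1 : (0:ℝ) < k * ((c + q) * (Ps - q)) := by positivity
    positivity
  beta_reduce
  rw [if_pos ⟨hq1, hq2⟩, abs_of_pos hψdq, ← ENNReal.ofReal_mul hψdq.le]
  congr 1
  rw [_root_.gammaPDF, if_pos hψq]
  have hup := hupos q hq1 hq2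
  set L := A * B - Real.log ((Ps - q) / (c + q)) with hLdef
  clear_value L
  have hL : 0 < L := by rw [hLdef]; linarith [hlogu q hq1 hq2]
  have hψL : ψ q = L / k := by rw [hLdef]; exact hψval q hq1
  have hGa : 0 < Real.Gamma a := Real.Gamma_pos_of_pos ha
  have hX : (0:ℝ) < Real.exp (A * B * bhat) := Real.exp_pos _
  have E1 : Real.exp (-(b * ψ q)) =
      ((Ps - q) ^ bhat * ((c + q) ^ bhat)⁻¹) / Real.exp (A * B * bhat) := by
    have hbK : b = bhat * k := by rw [hbhk]; field_simp
    have h₁ : -(b * ψ q) = Real.log ((Ps - q) / (c + q)) * bhat + -(A * B * bhat) := by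
      rw [hψL, hbK, hLdef]; field_simp; ring
    rw [h₁, Real.exp_add, Real.exp_neg, ← Real.rpow_def_of_pos hup,
      Real.div_rpow hPq.le hcq.le, div_eq_mul_inv, ← div_eq_mul_inv
        (((Ps - q) ^ bhat * ((c + q) ^ bhat)⁻¹)) (Real.exp (A * B * bhat))]
  have E2 : (ψ q) ^ (a - 1) = L ^ (a - 1) * k / k ^ a := by
    rw [hψL, Real.div_rpow hL.le hk.le, Real.rpow_sub hk, Real.rpow_one,
      div_div_eq_mul_div]
  have E3 : bhat ^ a = b ^ a / k ^ a := by
    rw [hbhk, Real.div_rpow hb.le hk.le]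
  have E4 : (Ps - q) ^ (bhat - 1) = (Ps - q) ^ bhat / (Ps - q) := by
    rw [Real.rpow_sub hPq, Real.rpow_one]
  have E5 : (c + q) ^ (-bhat - 1) = ((c + q) ^ bhat * (c + q))⁻¹ := by
    rw [show -bhat - 1 = -(bhat + 1) by ring, Real.rpow_neg hcq.le,
      Real.rpow_add hcq, Real.rpow_one]
  rw [hu q hq1, ← hLdef, hcE, E1, E2, E3, E4, E5, hψdval q]
  have hKa : (0:ℝ) < k ^ a := Real.rpow_pos_of_pos hk a
  have hPb : (0:ℝ) < (Ps - q) ^ bhat := Real.rpow_pos_of_pos hPq bhat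
  have hCb : (0:ℝ) < (c + q) ^ bhat := Real.rpow_pos_of_pos hcq bhat
  field_simp
end

section
/- Let L ≥ 1, let a_i > 0, b_i > 0, l_i > 0, p_i > 0 for i = 1, …, L, and let A, B, P_s be positive constants. Assume the ratios b_i/(l_i p_i) are all equal to a common value β > 0, and set sa = Σ_{i=1}^{L} a_i. Let G_1, …, G_L be independent random variables with G_i following the Gamma(a_i, b_i) distribution, and define the harvested power Q = P_s(1 + e^{AB}) / (e^{AB}(1 + e^{−A(Σ_{i=1}^{L} l_i p_i G_i − B)})) − P_s e^{−AB}. Then for every q with 0 < q < P_s, P(Q ≤ q) = (1/Γ(sa)) γ(sa, −(β/A) (ln(P_s(1 + e^{AB})/(e^{AB}(q + P_s e^{−AB})) − 1) − A B)), where γ(a, u) = ∫_0^u t^{a−1} e^{−t} dt is the lower incomplete gamma function. -/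
open MeasureTheory ProbabilityTheory Set

open scoped ENNReal

noncomputable def gpdf (a r : ℝ) : ℝ → ℝ≥0∞ :=
  fun x => ENNReal.ofReal (_root_.gammaPDF a r x)

lemma measurable_gammaPDF' (a r : ℝ) : Measurable (_root_.gammaPDF a r) := by
  unfold _root_.gammaPDF
  apply Measurable.ite (measurableSet_lt measurable_const measurable_id)
  · fun_prop
  · fun_prop

lemma measurable_gpdf (a r : ℝ) : Measurable (gpdf a r) :=
  (measurable_gammaPDF' a r).ennreal_ofReal

lemma real_beta {u v : ℝ} (hu : 0 < u) (hv : 0 < v) :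
    ∫ x in (0:ℝ)..1, x ^ (u-1) * (1-x) ^ (v-1) =
      Real.Gamma u * Real.Gamma v / Real.Gamma (u+v) := by
  have h := Complex.Gamma_mul_Gamma_eq_betaIntegral (s := (u:ℂ)) (t := (v:ℂ))
    (by simpa using hu) (by simpa using hv)
  have hG : Complex.Gamma ((u:ℂ) + v) ≠ 0 :=
    Complex.Gamma_ne_zero_of_re_pos (by simpa using add_pos hu hv)
  have hbeta : Complex.betaIntegral u v =
      ((∫ x in (0:ℝ)..1, x ^ (u-1) * (1-x) ^ (v-1) : ℝ) : ℂ) := by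
    rw [Complex.betaIntegral, ← intervalIntegral.integral_ofReal]
    apply intervalIntegral.integral_congr
    intro x hx
    rw [Set.uIcc_of_le (by norm_num : (0:ℝ) ≤ 1)] at hx
    have e1 : ((x:ℂ)) ^ ((u:ℂ)-1) = ((x ^ (u-1) : ℝ) : ℂ) := by
      rw [show ((u:ℂ)-1) = ((u-1 : ℝ):ℂ) by push_cast; ring,
        ← Complex.ofReal_cpow hx.1]
    have e2 : ((1:ℂ) - (x:ℂ)) ^ ((v:ℂ)-1) = (((1-x) ^ (v-1) : ℝ) : ℂ) := by
      rw [show ((1:ℂ) - (x:ℂ)) = ((1 - x : ℝ):ℂ) by push_cast; ring,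
        show ((v:ℂ)-1) = ((v-1 : ℝ):ℂ) by push_cast; ring,
        ← Complex.ofReal_cpow (by linarith [hx.2])]
    dsimp only
    rw [e1, e2, ← Complex.ofReal_mul]
  rw [hbeta] at h
  have h3 : Complex.Gamma (u:ℂ) = (Real.Gamma u : ℂ) := Complex.Gamma_ofReal u
  have h4 : Complex.Gamma (v:ℂ) = (Real.Gamma v : ℂ) := Complex.Gamma_ofReal v
  have h5 : Complex.Gamma ((u:ℂ)+v) = (Real.Gamma (u+v) : ℂ) := by
    rw [← Complex.ofReal_add]; exact Complex.Gamma_ofReal _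
  rw [h3, h4, h5, ← Complex.ofReal_mul, ← Complex.ofReal_mul] at h
  rw [h5] at hG
  have h6 : Real.Gamma u * Real.Gamma v =
      Real.Gamma (u+v) * ∫ x in (0:ℝ)..1, x ^ (u-1) * (1-x) ^ (v-1) := by
    exact_mod_cast h
  have hGR : Real.Gamma (u+v) ≠ 0 := by
    intro h0; apply hG; rw [h0]; simp
  rw [h6]
  field_simp
lemma beta_scaled {u v z : ℝ} (hu : 0 < u) (hv : 0 < v) (hz : 0 < z)
    (hbeta : ∫ x in (0:ℝ)..1, x ^ (u-1) * (1-x) ^ (v-1) =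
      Real.Gamma u * Real.Gamma v / Real.Gamma (u+v)) :
    ∫ x in (0:ℝ)..z, x ^ (u-1) * (z-x) ^ (v-1) =
      z ^ (u+v-1) * (Real.Gamma u * Real.Gamma v / Real.Gamma (u+v)) := by
  have h1 := intervalIntegral.integral_comp_mul_left (a := (0:ℝ)) (b := 1)
    (fun x => x ^ (u-1) * (z-x) ^ (v-1)) hz.ne'
  simp only [mul_zero, mul_one] at h1
  have h2 : ∫ s in (0:ℝ)..1, (fun x => x ^ (u-1) * (z-x) ^ (v-1)) (z * s)
      = z ^ (u+v-2) * ∫ s in (0:ℝ)..1, s ^ (u-1) * (1-s) ^ (v-1) := by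
    rw [← intervalIntegral.integral_const_mul]
    apply intervalIntegral.integral_congr
    intro s hs
    rw [Set.uIcc_of_le (by norm_num : (0:ℝ) ≤ 1)] at hs
    dsimp only
    have e1 : (z * s) ^ (u-1) = z ^ (u-1) * s ^ (u-1) :=
      Real.mul_rpow hz.le hs.1
    have e2 : (z - z*s) ^ (v-1) = z ^ (v-1) * (1-s) ^ (v-1) := by
      rw [show z - z*s = z * (1-s) by ring]
      exact Real.mul_rpow hz.le (by linarith [hs.2])
    rw [e1, e2]
    rw [show z ^ (u+v-2) = z ^ (u-1) * z ^ (v-1) by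
      rw [← Real.rpow_add hz]; ring_nf]
    ring
  rw [h2] at h1
  have hzz : z ^ (u+v-1) = z * z ^ (u+v-2) := by
    rw [show u+v-1 = 1 + (u+v-2) by ring, Real.rpow_add hz, Real.rpow_one]
  field_simp at h1
  rw [hbeta] at h1
  rw [smul_eq_mul] at h1
  rw [hzz, mul_assoc, h1, ← mul_assoc, mul_one_div_cancel hz.ne', one_mul]
lemma beta_integrable {u v z : ℝ} (hu : 0 < u) (hv : 0 < v) (hz : 0 < z) :
    IntervalIntegrable (fun x => x ^ (u-1) * (z-x) ^ (v-1)) volume 0 z := by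
  have hhalf : (0:ℝ) < z/2 := by linarith
  apply IntervalIntegrable.trans (b := z/2)
  · -- on [0, z/2]
    have h1 : IntervalIntegrable (fun x : ℝ => x ^ (u-1)) volume 0 (z/2) :=
      intervalIntegral.intervalIntegrable_rpow' (by linarith)
    apply h1.mul_continuousOn
    apply ContinuousOn.rpow_const
    · exact (continuous_const.sub continuous_id).continuousOn
    · intro x hx
      rw [Set.uIcc_of_le (by linarith : (0:ℝ) ≤ z/2)] at hx
      left
      have := hx.2
      intro h0
      have : x = z := by linarith [sub_eq_zero.mp h0]
      linarith [hx.2]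
  · -- on [z/2, z]
    have h1 : IntervalIntegrable (fun x : ℝ => x ^ (v-1)) volume 0 (z/2) :=
      intervalIntegral.intervalIntegrable_rpow' (by linarith)
    have h2 : IntervalIntegrable (fun x : ℝ => (z - x) ^ (v-1)) volume (z - z/2) (z - 0) :=
      (IntervalIntegrable.comp_sub_left h1 z).symm
    simp only [sub_zero] at h2
    rw [show z - z/2 = z/2 by ring] at h2
    apply h2.continuousOn_mul
    apply ContinuousOn.rpow_const continuous_id.continuousOn
    intro x hx
    rw [Set.uIcc_of_le (by linarith : z/2 ≤ z)] at hx
    left; intro h0; simp only [id_eq] at h0; rw [h0] at hx; linarith [hx.1]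

lemma conv_density {a a' β : ℝ} (ha : 0 < a) (ha' : 0 < a') (hβ : 0 < β) (z : ℝ) :
    ∫⁻ t, gpdf a β t * gpdf a' β (z - t) = gpdf (a+a') β z := by
  have hΓa := Real.Gamma_pos_of_pos ha
  have hΓa' := Real.Gamma_pos_of_pos ha'
  have hΓs := Real.Gamma_pos_of_pos (add_pos ha ha')
  by_cases hz : 0 < z
  · set C : ℝ := β ^ (a+a') / (Real.Gamma a * Real.Gamma a') * Real.exp (-(β*z)) with hC
    have hC0 : 0 ≤ C := by positivity
    have hind : (fun t => gpdf a β t * gpdf a' β (z - t)) =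
        (Ioo 0 z).indicator (fun t =>
          ENNReal.ofReal (C * (t ^ (a-1) * (z-t) ^ (a'-1)))) := by
      funext t
      by_cases ht : t ∈ Ioo 0 z
      · rw [Set.indicator_of_mem ht]
        obtain ⟨ht1, ht2⟩ := ht
        have hzt : 0 < z - t := by linarith
        simp only [gpdf, _root_.gammaPDF, if_pos ht1, if_pos hzt]
        rw [← ENNReal.ofReal_mul (by positivity)]
        congr 1
        rw [hC, show β ^ (a+a') = β ^ a * β ^ a' from Real.rpow_add hβ a a',
          show Real.exp (-(β*z)) = Real.exp (-(β*t)) * Real.exp (-(β*(z-t))) by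
            rw [← Real.exp_add]; ring_nf]
        ring
      · rw [Set.indicator_of_notMem ht]
        rw [Set.mem_Ioo, not_and_or] at ht
        rcases ht with ht | ht
        · simp only [gpdf, _root_.gammaPDF, if_neg ht, ENNReal.ofReal_zero, zero_mul]
        · have h2 : ¬ 0 < z - t := by push_neg at ht ⊢; linarith
          simp only [gpdf, _root_.gammaPDF, if_neg h2, ENNReal.ofReal_zero, mul_zero]
    rw [hind, lintegral_indicator measurableSet_Ioo]
    have hint : IntegrableOn (fun t => t ^ (a-1) * (z-t) ^ (a'-1)) (Ioo 0 z) := by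
      have := (intervalIntegrable_iff_integrableOn_Ioc_of_le hz.le).mp
        (beta_integrable ha ha' hz)
      exact this.mono_set Set.Ioo_subset_Ioc_self
    have hcongr : ∀ t ∈ Ioo (0:ℝ) z,
        ENNReal.ofReal (C * (t ^ (a-1) * (z-t) ^ (a'-1))) =
        ENNReal.ofReal C * ENNReal.ofReal (t ^ (a-1) * (z-t) ^ (a'-1)) := by
      intro t ht
      exact ENNReal.ofReal_mul hC0
    rw [setLIntegral_congr_fun measurableSet_Ioo hcongr,
      lintegral_const_mul' _ _ ENNReal.ofReal_ne_top,
      ← MeasureTheory.ofReal_integral_eq_lintegral_ofReal hint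
        ((ae_restrict_iff' measurableSet_Ioo).mpr (ae_of_all _ fun t ht =>
          mul_nonneg (Real.rpow_nonneg ht.1.le _)
            (Real.rpow_nonneg (by linarith [ht.2]) _)))]
    have hio : ∫ t in Ioo (0:ℝ) z, t ^ (a-1) * (z-t) ^ (a'-1) =
        ∫ t in (0:ℝ)..z, t ^ (a-1) * (z-t) ^ (a'-1) := by
      rw [intervalIntegral.integral_of_le hz.le, MeasureTheory.integral_Ioc_eq_integral_Ioo]
    rw [hio, beta_scaled ha ha' hz (real_beta ha ha'),
      ← ENNReal.ofReal_mul hC0]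
    simp only [gpdf, _root_.gammaPDF, if_pos hz]
    congr 1
    rw [hC]
    field_simp
  · have hall : ∀ t, gpdf a β t * gpdf a' β (z - t) = 0 := by
      intro t
      by_cases ht : 0 < t
      · have h2 : ¬ 0 < z - t := by push_neg at hz ⊢; linarith
        simp only [gpdf, _root_.gammaPDF, if_neg h2, ENNReal.ofReal_zero, mul_zero]
      · simp only [gpdf, _root_.gammaPDF, if_neg ht, ENNReal.ofReal_zero, zero_mul]
    simp only [hall, lintegral_zero]
    simp only [gpdf, _root_.gammaPDF, if_neg hz, ENNReal.ofReal_zero]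
lemma map_add_law {Ω : Type*} [MeasureSpace Ω] [IsProbabilityMeasure (ℙ : Measure Ω)]
    (X Y : Ω → ℝ) (hX : Measurable X) (hY : Measurable Y)
    (hXY : IndepFun X Y ℙ) (f g : ℝ → ℝ≥0∞) (hf : Measurable f) (hg : Measurable g)
    (hmX : Measure.map X ℙ = volume.withDensity f)
    (hmY : Measure.map Y ℙ = volume.withDensity g) :
    Measure.map (fun ω => X ω + Y ω) ℙ =
      volume.withDensity (fun t => ∫⁻ x, f x * g (t - x)) := by
  have hconvm : Measurable (fun t : ℝ => ∫⁻ x, f x * g (t - x)) := by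
    apply Measurable.lintegral_prod_right' (f := fun p : ℝ × ℝ => f p.2 * g (p.1 - p.2))
    exact (hf.comp measurable_snd).mul (hg.comp (measurable_fst.sub measurable_snd))
  have hprod : Measure.map (fun ω => (X ω, Y ω)) ℙ =
      (volume.withDensity f).prod (volume.withDensity g) := by
    rw [← hmX, ← hmY]
    exact (indepFun_iff_map_prod_eq_prod_map_map hX.aemeasurable hY.aemeasurable).mp hXY
  have hcomp : Measure.map (fun ω => X ω + Y ω) ℙ =
      Measure.map (fun p : ℝ × ℝ => p.1 + p.2)
        ((volume.withDensity f).prod (volume.withDensity g)) := by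
    rw [← hprod, Measure.map_map measurable_add (hX.prodMk hY)]
    rfl
  ext s hs
  rw [hcomp, Measure.map_apply measurable_add hs,
    Measure.prod_apply (measurable_add hs), withDensity_apply _ hs]
  have hinner : ∀ x : ℝ,
      (volume.withDensity g) (Prod.mk x ⁻¹' ((fun p : ℝ × ℝ => p.1 + p.2) ⁻¹' s)) =
      ∫⁻ t, s.indicator (fun _ => (1:ℝ≥0∞)) t * g (t - x) := by
    intro x
    have hpre : (Prod.mk x ⁻¹' ((fun p : ℝ × ℝ => p.1 + p.2) ⁻¹' s)) =
        (fun y => x + y) ⁻¹' s := rfl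
    rw [hpre, withDensity_apply _ (hs.preimage (measurable_const_add x))]
    have := (measurePreserving_add_left volume x).setLIntegral_comp_preimage_emb
      (MeasurableEquiv.addLeft x).measurableEmbedding (fun t => g (t - x)) s
    rw [show (fun y => x + y) ⁻¹' s = (x + ·) ⁻¹' s from rfl]
    rw [show ∫⁻ y in (x + ·) ⁻¹' s, g y ∂volume
        = ∫⁻ y in (x + ·) ⁻¹' s, g ((x + y) - x) ∂volume by
      apply setLIntegral_congr_fun (hs.preimage (measurable_const_add x))
      exact fun y _ => by simp only [add_sub_cancel_left]]
    rw [this, ← lintegral_indicator hs]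
    congr 1
    funext t
    by_cases ht : t ∈ s
    · simp [ht]
    · simp [ht]
  rw [lintegral_congr hinner,
    lintegral_withDensity_eq_lintegral_mul volume hf
      (by
        apply Measurable.lintegral_prod_right'
          (f := fun p : ℝ × ℝ => s.indicator (fun _ => (1:ℝ≥0∞)) p.2 * g (p.2 - p.1))
        exact ((measurable_indicator_const_iff 1).mpr hs).comp measurable_snd |>.mul
          (hg.comp (measurable_snd.sub measurable_fst)))]
  simp only [Pi.mul_apply]
  have hswap := lintegral_lintegral_swap (μ := (volume : Measure ℝ)) (ν := (volume : Measure ℝ))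
    (f := fun x t => f x * (s.indicator (fun _ => (1:ℝ≥0∞)) t * g (t - x)))
    (((hf.comp measurable_fst).mul
      (((measurable_indicator_const_iff 1).mpr hs).comp measurable_snd |>.mul
        (hg.comp (measurable_snd.sub measurable_fst)))).aemeasurable)
  rw [show (fun x => f x * ∫⁻ t, s.indicator (fun _ => (1:ℝ≥0∞)) t * g (t - x))
      = fun x => ∫⁻ t, f x * (s.indicator (fun _ => (1:ℝ≥0∞)) t * g (t - x)) by
    funext x
    exact (lintegral_const_mul (f x) (by measurability)).symm]
  rw [hswap]
  rw [← lintegral_indicator hs]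
  congr 1
  funext t
  by_cases ht : t ∈ s
  · simp only [Set.indicator_of_mem ht]
    rw [show (fun x => f x * (1 * g (t - x))) = fun x => f x * g (t - x) by
      funext x; rw [one_mul]]
  · simp only [Set.indicator_of_notMem ht]
    simp
lemma map_scale {a b c : ℝ} (hb : 0 < b) (hc : 0 < c) :
    Measure.map (fun x => c * x) (volume.withDensity (gpdf a b)) =
      volume.withDensity (gpdf a (b/c)) := by
  ext s hs
  rw [Measure.map_apply (measurable_const_mul c) hs,
    withDensity_apply _ (hs.preimage (measurable_const_mul c)),
    withDensity_apply _ hs]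
  have h1 : ∫⁻ x in (fun x => c * x) ⁻¹' s, gpdf a b x ∂volume
      = ∫⁻ x in (fun x => c * x) ⁻¹' s, (fun y => gpdf a b (y / c)) ((fun x => c * x) x) ∂volume := by
    apply setLIntegral_congr_fun (hs.preimage (measurable_const_mul c))
    intro x _
    simp only
    rw [mul_comm c x, mul_div_assoc, div_self hc.ne', mul_one]
  have hF : Measurable (fun y : ℝ => gpdf a b (y / c)) :=
    (measurable_gpdf a b).comp (measurable_id.div_const c)
  rw [h1, ← setLIntegral_map hs hF (measurable_const_mul c),
    Real.map_volume_mul_left hc.ne', Measure.restrict_smul, lintegral_smul_measure]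
  have h2 : ∀ y : ℝ, ENNReal.ofReal |c⁻¹| * gpdf a b (y / c) = gpdf a (b/c) y := by
    intro y
    rw [abs_of_pos (by positivity)]
    by_cases hy : 0 < y
    · have hyc : 0 < y / c := by positivity
      simp only [gpdf, _root_.gammaPDF, if_pos hy, if_pos hyc]
      rw [← ENNReal.ofReal_mul (by positivity)]
      congr 1
      have e1 : (y / c) ^ (a - 1) = y ^ (a-1) / c ^ (a-1) :=
        Real.div_rpow hy.le hc.le _
      have e2 : (b / c) ^ a = b ^ a / c ^ a := Real.div_rpow hb.le hc.le _
      have e3 : c ^ a = c ^ (a-1) * c := by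
        rw [← Real.rpow_add_one hc.ne' (a-1)]; ring_nf
      have e4 : b * (y / c) = b / c * y := by field_simp
      rw [e1, e2, e3, e4]
      have hca : (0:ℝ) < c ^ (a-1) := Real.rpow_pos_of_pos hc _
      field_simp
    · have hyc : ¬ 0 < y / c := by
        intro h; apply hy; have := mul_pos h hc; rwa [div_mul_cancel₀] at this
        exact hc.ne'
      simp only [gpdf, _root_.gammaPDF, if_neg hy, if_neg hyc, ENNReal.ofReal_zero, mul_zero]
  calc ENNReal.ofReal |c⁻¹| * ∫⁻ y in s, gpdf a b (y / c) ∂volume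
      = ∫⁻ y in s, ENNReal.ofReal |c⁻¹| * gpdf a b (y / c) ∂volume :=
        (lintegral_const_mul' _ _ ENNReal.ofReal_ne_top).symm
    _ = ∫⁻ y in s, gpdf a (b/c) y ∂volume := by
        exact lintegral_congr fun y => h2 y

lemma sum_law {Ω : Type*} [MeasureSpace Ω] [IsProbabilityMeasure (ℙ : Measure Ω)]
    {L : ℕ} (X : Fin L → Ω → ℝ) (a : Fin L → ℝ) (β : ℝ)
    (ha : ∀ i, 0 < a i) (hβ : 0 < β) (hX : ∀ i, Measurable (X i))
    (hindep : iIndepFun X ℙ)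
    (hlaw : ∀ i, Measure.map (X i) ℙ = volume.withDensity (gpdf (a i) β))
    (s : Finset (Fin L)) (hs : s.Nonempty) :
    Measure.map (fun ω => ∑ i ∈ s, X i ω) ℙ =
      volume.withDensity (gpdf (∑ i ∈ s, a i) β) := by
  induction hs using Finset.Nonempty.cons_induction with
  | singleton i => simpa using hlaw i
  | cons i s hi hne ih =>
    have hsum_meas : Measurable (fun ω => ∑ j ∈ s, X j ω) := by
      apply Finset.measurable_sum
      exact fun j _ => hX j
    have hindep2 : IndepFun (X i) (fun ω => ∑ j ∈ s, X j ω) ℙ := by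
      have h := (hindep.indepFun_finsetSum_of_notMem hX hi).symm
      have hfe : (∑ j ∈ s, X j) = fun ω => ∑ j ∈ s, X j ω := by
        funext ω; exact Finset.sum_apply ω s X
      rwa [hfe] at h
    have hmap : Measure.map (fun ω => X i ω + ∑ j ∈ s, X j ω) ℙ =
        volume.withDensity (fun t => ∫⁻ x,
          gpdf (a i) β x * gpdf (∑ j ∈ s, a j) β (t - x)) :=
      map_add_law (X i) (fun ω => ∑ j ∈ s, X j ω) (hX i) hsum_meas hindep2
        _ _ (measurable_gpdf _ _) (measurable_gpdf _ _) (hlaw i) ih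
    have hsum_pos : 0 < ∑ j ∈ s, a j := Finset.sum_pos (fun j _ => ha j) hne
    have hconv : (fun t => ∫⁻ x, gpdf (a i) β x * gpdf (∑ j ∈ s, a j) β (t - x))
        = gpdf (∑ j ∈ Finset.cons i s hi, a j) β := by
      funext t
      rw [conv_density (ha i) hsum_pos hβ t, Finset.sum_cons]
    rw [← hconv]
    rw [← hmap]
    congr 1
    funext ω
    rw [Finset.sum_cons]

lemma gamma_cdf {sa β c : ℝ} (hsa : 0 < sa) (hβ : 0 < β) (hc : 0 < c) :
    volume.withDensity (gpdf sa β) (Iic c) =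
      ENNReal.ofReal ((1 / Real.Gamma sa) *
        ∫ t in (0:ℝ)..(β * c), t ^ (sa - 1) * Real.exp (-t)) := by
  have hΓ : 0 < Real.Gamma sa := Real.Gamma_pos_of_pos hsa
  set C : ℝ := β ^ sa / Real.Gamma sa with hCdef
  have hC0 : 0 ≤ C := by positivity
  rw [withDensity_apply _ measurableSet_Iic,
    show (Iic c : Set ℝ) = Iic 0 ∪ Ioc 0 c from (Set.Iic_union_Ioc_eq_Iic hc.le).symm,
    lintegral_union measurableSet_Ioc (Set.Iic_disjoint_Ioc le_rfl)]
  have hzero : ∫⁻ x in Iic (0:ℝ), gpdf sa β x = 0 := by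
    have h0 : ∀ x ∈ Iic (0:ℝ), gpdf sa β x = 0 :=
      fun x hx => by
        simp only [gpdf, _root_.gammaPDF, if_neg (not_lt.mpr (Set.mem_Iic.mp hx)), ENNReal.ofReal_zero]
    rw [setLIntegral_congr_fun measurableSet_Iic h0, lintegral_zero]
  rw [hzero, zero_add]
  have hint : IntervalIntegrable (fun x => C * (x ^ (sa-1) * Real.exp (-(β*x)))) volume 0 c := by
    apply IntervalIntegrable.const_mul
    apply (intervalIntegral.intervalIntegrable_rpow' (by linarith)).mul_continuousOn
    exact (Real.continuous_exp.comp (continuous_const.mul continuous_id).neg).continuousOn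
  have hIoc : IntegrableOn (fun x => C * (x ^ (sa-1) * Real.exp (-(β*x)))) (Ioc 0 c) :=
    (intervalIntegrable_iff_integrableOn_Ioc_of_le hc.le).mp hint
  have hcongr : ∫⁻ x in Ioc (0:ℝ) c, gpdf sa β x =
      ∫⁻ x in Ioc (0:ℝ) c, ENNReal.ofReal (C * (x ^ (sa-1) * Real.exp (-(β*x)))) := by
    apply setLIntegral_congr_fun measurableSet_Ioc
    intro x hx
    simp only [gpdf, _root_.gammaPDF, if_pos hx.1]
    congr 1
    ring
  rw [hcongr, ← MeasureTheory.ofReal_integral_eq_lintegral_ofReal hIoc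
    ((ae_restrict_iff' measurableSet_Ioc).mpr (ae_of_all _ fun x hx =>
      mul_nonneg hC0 (mul_nonneg (Real.rpow_nonneg hx.1.le _) (Real.exp_nonneg _))))]
  congr 1
  have h1 : ∫ x in Ioc (0:ℝ) c, C * (x ^ (sa-1) * Real.exp (-(β*x)))
      = ∫ x in (0:ℝ)..c, C * (x ^ (sa-1) * Real.exp (-(β*x))) := by
    rw [intervalIntegral.integral_of_le hc.le]
  rw [h1]
  have hsub := intervalIntegral.integral_comp_mul_left (a := (0:ℝ)) (b := c)
    (fun t => t ^ (sa-1) * Real.exp (-t)) hβ.ne'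
  simp only [mul_zero] at hsub
  have h2 : ∫ x in (0:ℝ)..c, (fun t => t ^ (sa-1) * Real.exp (-t)) (β * x)
      = β ^ (sa-1) * ∫ x in (0:ℝ)..c, x ^ (sa-1) * Real.exp (-(β*x)) := by
    rw [← intervalIntegral.integral_const_mul]
    apply intervalIntegral.integral_congr
    intro x hx
    rw [Set.uIcc_of_le hc.le] at hx
    simp only
    rw [Real.mul_rpow hβ.le hx.1]
    ring
  rw [h2] at hsub
  have hβsa : β ^ sa = β ^ (sa-1) * β := by
    rw [← Real.rpow_add_one hβ.ne' (sa-1)]; ring_nf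
  have hJ : ∫ t in (0:ℝ)..(β*c), t ^ (sa-1) * Real.exp (-t)
      = β * (β ^ (sa-1) * ∫ x in (0:ℝ)..c, x ^ (sa-1) * Real.exp (-(β*x))) := by
    rw [smul_eq_mul] at hsub
    field_simp at hsub ⊢
    linarith [hsub]
  rw [intervalIntegral.integral_const_mul, hJ, hCdef, hβsa]
  ring

/-- **CDF of the harvested power in the nonlinear MISO energy-harvesting model with
equal ratios.** If the `G_i ~ Gamma(a_i, b_i)` are independent, the ratios
`b_i/(l_i p_i)` all equal `β > 0`, `sa = Σ a_i`, and
`Q = P_s(1+e^{AB})/(e^{AB}(1+e^{-A(Σ l_i p_i G_i - B)})) - P_s e^{-AB}`, then for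
every `0 < q < P_s`,
`P(Q ≤ q) = (1/Γ(sa)) γ(sa, -(β/A)(ln(P_s(1+e^{AB})/(e^{AB}(q+P_s e^{-AB})) - 1) - AB))`. -/
theorem harvestedPower_miso_cdf {Ω : Type*} [MeasureSpace Ω]
    [IsProbabilityMeasure (ℙ : Measure Ω)] (L : ℕ) (hL : 1 ≤ L)
    (a b l p : Fin L → ℝ) (A B Ps β : ℝ)
    (ha : ∀ i, 0 < a i) (hb : ∀ i, 0 < b i) (hl : ∀ i, 0 < l i) (hp : ∀ i, 0 < p i)
    (hA : 0 < A) (hB : 0 < B) (hPs : 0 < Ps) (hβ : 0 < β)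
    (hratio : ∀ i, b i / (l i * p i) = β)
    (G : Fin L → Ω → ℝ) (hG : ∀ i, Measurable (G i))
    (hindep : iIndepFun G ℙ)
    (hlaw : ∀ i, Measure.map (G i) ℙ =
      volume.withDensity fun x => ENNReal.ofReal (gammaPDF (a i) (b i) x))
    (q : ℝ) (hq0 : 0 < q) (hq1 : q < Ps) :
    ℙ {ω | Ps * (1 + Real.exp (A * B)) /
            (Real.exp (A * B) *
              (1 + Real.exp (-(A * ((∑ i, l i * p i * G i ω) - B))))) -
          Ps * Real.exp (-(A * B)) ≤ q} =
      ENNReal.ofReal ((1 / Real.Gamma (∑ i, a i)) *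
        ∫ t in (0 : ℝ)..(-(β / A) *
            (Real.log (Ps * (1 + Real.exp (A * B)) /
              (Real.exp (A * B) * (q + Ps * Real.exp (-(A * B)))) - 1) - A * B)),
          t ^ ((∑ i, a i) - 1) * Real.exp (-t)) := by
  have hEpos : 0 < Real.exp (A * B) := Real.exp_pos _
  set E : ℝ := Real.exp (A * B) with hEdef
  have hD : 0 < E * q + Ps := by positivity
  have hED : E * (q + Ps * Real.exp (-(A*B))) = E * q + Ps := by
    rw [Real.exp_neg, ← hEdef]
    field_simp
  set R : ℝ := Ps * (1 + E) / (E * (q + Ps * Real.exp (-(A * B)))) - 1 with hRdef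
  have hRalt : R = (Ps * (1 + E) - (E * q + Ps)) / (E * q + Ps) := by
    rw [hRdef, hED]
    field_simp
  have hR2 : R = E * (Ps - q) / (E * q + Ps) := by
    rw [hRalt]; congr 1; ring
  have hR0 : 0 < R := by
    rw [hR2]; exact div_pos (mul_pos hEpos (by linarith)) hD
  have hRE : R < E := by
    rw [hR2, div_lt_iff₀ hD]
    nlinarith [mul_pos hEpos hq0, mul_pos (mul_pos hEpos hEpos) hq0]
  set lk : ℝ := Real.log R with hlkdef
  have hlkAB : lk < A * B := by
    have h := Real.log_lt_log hR0 hRE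
    rwa [hEdef, Real.log_exp] at h
  set c : ℝ := B - lk / A with hcdef
  have hc0 : 0 < c := by
    rw [hcdef, sub_pos, div_lt_iff₀ hA]
    linarith [mul_comm A B]
  have hAc : A * c = A * B - lk := by
    rw [hcdef, mul_sub, mul_div_cancel₀ _ hA.ne']
  have hset : {ω | Ps * (1 + E) /
        (E * (1 + Real.exp (-(A * ((∑ i, l i * p i * G i ω) - B))))) -
        Ps * Real.exp (-(A * B)) ≤ q}
      = (fun ω => ∑ i, l i * p i * G i ω) ⁻¹' (Iic c) := by
    ext ω
    simp only [Set.mem_setOf_eq, Set.mem_preimage, Set.mem_Iic]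
    set sω : ℝ := ∑ i, l i * p i * G i ω with hsw
    set m : ℝ := Real.exp (-(A * (sω - B))) with hmdef
    have hm0 : 0 < m := Real.exp_pos _
    have h1 : (Ps * (1+E) / (E * (1+m)) - Ps * Real.exp (-(A*B)) ≤ q) ↔
        Ps*(1+E) ≤ (E*q + Ps) * (1+m) := by
      rw [sub_le_iff_le_add, div_le_iff₀ (by positivity : (0:ℝ) < E*(1+m)),
        show (q + Ps*Real.exp (-(A*B))) * (E*(1+m)) = (E*q+Ps)*(1+m) by
          rw [← hED]; ring]
    have h2 : Ps*(1+E) ≤ (E*q+Ps)*(1+m) ↔ R ≤ m := by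
      rw [hRalt, div_le_iff₀ hD]
      constructor <;> intro h <;> nlinarith
    have h3 : R ≤ m ↔ lk ≤ -(A * (sω - B)) := by
      rw [hlkdef, hmdef]
      exact (Real.log_le_iff_le_exp hR0).symm
    have h4 : lk ≤ -(A * (sω - B)) ↔ sω ≤ c := by
      have hrw : A * (sω - B) = A*sω - A*B := by ring
      constructor
      · intro h
        have h5 : A * sω ≤ A * c := by rw [hAc]; linarith
        exact le_of_mul_le_mul_left h5 hA
      · intro h
        have h5 : A * sω ≤ A * c := mul_le_mul_of_nonneg_left h hA.le
        rw [hAc] at h5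
        linarith
    exact h1.trans (h2.trans (h3.trans h4))
  have hXm : ∀ i, Measurable (fun ω => l i * p i * G i ω) :=
    fun i => (hG i).const_mul _
  have hXindep : iIndepFun (fun i ω => l i * p i * G i ω) ℙ := by
    exact hindep.comp (fun i => fun x : ℝ => l i * p i * x)
      (fun i => measurable_const_mul _)
  have hXlaw : ∀ i, Measure.map (fun ω => l i * p i * G i ω) ℙ =
      volume.withDensity (gpdf (a i) β) := by
    intro i
    have hlp : 0 < l i * p i := mul_pos (hl i) (hp i)
    have h1 : (fun ω => l i * p i * G i ω) = (fun x : ℝ => l i * p i * x) ∘ G i := rfl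
    rw [h1, ← Measure.map_map (measurable_const_mul _) (hG i), hlaw i]
    have h2 : (fun x => ENNReal.ofReal (_root_.gammaPDF (a i) (b i) x))
        = gpdf (a i) (b i) := rfl
    rw [h2]
    have h3 := map_scale (a := a i) (hb i) hlp
    rw [show (fun x : ℝ => l i * p i * x) = fun x : ℝ => (l i * p i) * x from rfl, h3,
      hratio i]
  have hS : Measurable (fun ω => ∑ i, l i * p i * G i ω) :=
    Finset.measurable_sum _ (fun i _ => hXm i)
  haveI : Nonempty (Fin L) := ⟨⟨0, hL⟩⟩
  have hsa : 0 < ∑ i, a i := Finset.sum_pos (fun i _ => ha i) Finset.univ_nonempty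
  have hmapS : Measure.map (fun ω => ∑ i, l i * p i * G i ω) ℙ =
      volume.withDensity (gpdf (∑ i, a i) β) :=
    sum_law _ a β ha hβ hXm hXindep hXlaw Finset.univ Finset.univ_nonempty
  rw [hset, ← Measure.map_apply hS measurableSet_Iic, hmapS, gamma_cdf hsa hβ hc0]
  rw [show -(β/A) * (lk - A*B) = β * c by rw [hcdef]; field_simp; ring]
end
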